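/- arXiv:1403.7982 — 4 statements merged into one kernel-verified Lean document; each statement's English description precedes it below -/
import Mathlib

section
/- Let λ be a partition of n = p + q and X ∈ {BDI, CI, CII, DIII}, and assume syd_X(λ;p,q) ≠ ∅. If X = BDI or X = CII, then syd_X(λ;p,q) has exactly one element if and only if the number of odd parts of λ equals |p − q|, or all odd parts of λ have the same length. If X = CI or X = DIII, then syd_X(λ;p,q) has exactly one element if and only if all parts of λ are odd. -/
open Finset

/-- A partition of `n`, given by the function `l` listing its parts in weakly
decreasing order: `l j = λ_j` is the `j`-th part for `1 ≤ j ≤ len`, and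
`l j = 0` for `j > len`. -/
structure PartitionData : Type where
  l : ℕ → ℕ
  len : ℕ
  anti : ∀ j, 1 ≤ j → l (j + 1) ≤ l j
  pos : ∀ j, 1 ≤ j → (0 < l j ↔ j ≤ len)

namespace PartitionData

/-- The multiplicity `m(i)` of `i` as a part of the partition. -/
def mult (P : PartitionData) (i : ℕ) : ℕ :=
  ((Finset.Icc 1 P.len).filter (fun j => P.l j = i)).card

/-- The finite set of (distinct) parts of the partition. -/
def partsSet (P : PartitionData) : Finset ℕ :=
  (Finset.Icc 1 P.len).image P.l

/-- The sum of the parts (i.e. the number `n` the partition partitions). -/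
def boxSum (P : PartitionData) : ℕ := ∑ j ∈ Finset.Icc 1 P.len, P.l j

/-- The number of odd parts of the partition. -/
def oddCount (P : PartitionData) : ℕ :=
  ((Finset.Icc 1 P.len).filter (fun j => Odd (P.l j))).card

end PartitionData

/-- A signed Young diagram of shape `P` and signature `(p, q)`, encoded by the
function `f` sending each part length `i` to `m_T⁺(i)`, the number of rows of
length `i` whose leading sign is `+`.  A row of length `i` with leading sign
`+` has `(i+1)/2` plus-boxes and `i/2` minus-boxes, and vice versa. -/
structure SYD (P : PartitionData) (p q : ℕ) : Type where
  f : ℕ → ℕ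
  le_mult : ∀ i, f i ≤ P.mult i
  plus_eq : ∑ i ∈ P.partsSet, (f i * ((i + 1) / 2) + (P.mult i - f i) * (i / 2)) = p
  minus_eq : ∑ i ∈ P.partsSet, (f i * (i / 2) + (P.mult i - f i) * ((i + 1) / 2)) = q

/-- `i` and `j` are consecutive distinct parts: `i > j` with no part strictly
in between (so if the distinct parts are `i_1 > ⋯ > i_k`, the pairs are
`(i_r, i_{r+1})`). -/
def Consec (P : PartitionData) (i j : ℕ) : Prop :=
  i ∈ P.partsSet ∧ j ∈ P.partsSet ∧ j < i ∧ ∀ x ∈ P.partsSet, ¬ (j < x ∧ x < i)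

/-- `j` is the smallest part `i_k`. -/
def IsMinPart (P : PartitionData) (j : ℕ) : Prop :=
  j ∈ P.partsSet ∧ ∀ x ∈ P.partsSet, j ≤ x

/-- Adjacency of signed Young diagrams with step `c`:
`π(T) - π(T') ∈ {±c(e_r - e_{r+1})} ∪ {±c e_k}` in the coordinates indexed by
the distinct parts `i_1 > ⋯ > i_k`. -/
def AdjRel (P : PartitionData) {p q : ℕ} (c : ℕ) (T T' : SYD P p q) : Prop :=
  (∃ i j, Consec P i j ∧ (∀ x, x ≠ i → x ≠ j → T.f x = T'.f x) ∧
    ((T.f i = T'.f i + c ∧ T'.f j = T.f j + c) ∨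
      (T'.f i = T.f i + c ∧ T.f j = T'.f j + c)))
  ∨ (∃ j, IsMinPart P j ∧ (∀ x, x ≠ j → T.f x = T'.f x) ∧
      (T.f j = T'.f j + c ∨ T'.f j = T.f j + c))

/-- The orbit graph `Γ(λ;p,q)` (type AIII). -/
def orbitGraph (P : PartitionData) (p q : ℕ) : SimpleGraph (SYD P p q) :=
  SimpleGraph.fromRel (AdjRel P 1)

/-- Type BDI: `m_T⁺(i) = m(i)/2` for every even part length `i`. -/
def SYD.IsBDI {P : PartitionData} {p q : ℕ} (T : SYD P p q) : Prop :=
  ∀ i, Even i → 2 * T.f i = P.mult i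

/-- Type CI: `p = q` and `m_T⁺(i) = m(i)/2` for every odd part length `i`. -/
def SYD.IsCI {P : PartitionData} {p q : ℕ} (T : SYD P p q) : Prop :=
  p = q ∧ ∀ i, Odd i → 2 * T.f i = P.mult i

/-- Type CII: `p`, `q` even, `m_T⁺(i) = m(i)/2` for every even part length `i`,
and `m(i)`, `m_T⁺(i)` even for every odd part length `i`. -/
def SYD.IsCII {P : PartitionData} {p q : ℕ} (T : SYD P p q) : Prop :=
  Even p ∧ Even q ∧ (∀ i, Even i → 2 * T.f i = P.mult i) ∧
    ∀ i, Odd i → Even (P.mult i) ∧ Even (T.f i)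

/-- Type DIII: `p = q`, `m_T⁺(i) = m(i)/2` for every odd part length `i`, and
`m(i)`, `m_T⁺(i)` even for every even part length `i`. -/
def SYD.IsDIII {P : PartitionData} {p q : ℕ} (T : SYD P p q) : Prop :=
  p = q ∧ (∀ i, Odd i → 2 * T.f i = P.mult i) ∧
    ∀ i, Even i → Even (P.mult i) ∧ Even (T.f i)

/-- The orbit graph `Γ_X(λ;p,q)` on the vertices `syd_X(λ;p,q)` (given by the
predicate `Pr`), with step `c` (`c = 1` for X = BDI, CI and `c = 2` for
X = CII, DIII). -/
def orbitGraphX (P : PartitionData) (p q c : ℕ) (Pr : SYD P p q → Prop) :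
    SimpleGraph {T : SYD P p q // Pr T} :=
  SimpleGraph.fromRel (fun T T' => AdjRel P c T.1 T'.1)

-- ================= AUX =================
section MyAux

theorem mySydExt {P : PartitionData} {p q : ℕ} {T T' : SYD P p q} (h : T.f = T'.f) : T = T' := by
  cases T; cases T'; simp only at h; subst h; rfl

lemma myMemParts {P : PartitionData} {i : ℕ} :
    i ∈ P.partsSet ↔ ∃ j, 1 ≤ j ∧ j ≤ P.len ∧ P.l j = i := by
  simp [PartitionData.partsSet, Finset.mem_image, Finset.mem_Icc, and_assoc]

lemma myMultPos {P : PartitionData} {i : ℕ} (h : i ∈ P.partsSet) : 0 < P.mult i := by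
  obtain ⟨j, hj1, hj2, hj3⟩ := myMemParts.mp h
  exact Finset.card_pos.mpr ⟨j, Finset.mem_filter.mpr ⟨Finset.mem_Icc.mpr ⟨hj1, hj2⟩, hj3⟩⟩

lemma myMultZero {P : PartitionData} {i : ℕ} (h : i ∉ P.partsSet) : P.mult i = 0 := by
  rw [PartitionData.mult, Finset.card_eq_zero, Finset.filter_eq_empty_iff]
  intro j hj hji
  rw [Finset.mem_Icc] at hj
  exact h (myMemParts.mpr ⟨j, hj.1, hj.2, hji⟩)

lemma myFZero {P : PartitionData} {p q : ℕ} (T : SYD P p q) {i : ℕ} (h : i ∉ P.partsSet) :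
    T.f i = 0 := Nat.le_zero.mp (myMultZero h ▸ T.le_mult i)

def myC (P : PartitionData) : ℕ := ∑ i ∈ P.partsSet, P.mult i * (i / 2)
def myOddParts (P : PartitionData) : Finset ℕ := P.partsSet.filter (fun i => Odd i)

lemma myPtPlus (g m i : ℕ) (h : g ≤ m) :
    g * ((i + 1) / 2) + (m - g) * (i / 2) = m * (i / 2) + if Odd i then g else 0 := by
  obtain ⟨k, rfl⟩ := Nat.exists_eq_add_of_le h
  rw [Nat.add_sub_cancel_left]
  rcases Nat.even_or_odd i with he | ho
  · have h2 : i % 2 = 0 := Nat.even_iff.mp he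
    have h1 : (i + 1) / 2 = i / 2 := by omega
    rw [h1, if_neg (by simp [Nat.odd_iff, h2])]
    ring
  · have h2 : i % 2 = 1 := Nat.odd_iff.mp ho
    have h1 : (i + 1) / 2 = i / 2 + 1 := by omega
    rw [h1, if_pos ho]
    ring

lemma myPtMinus (g m i : ℕ) (h : g ≤ m) :
    g * (i / 2) + (m - g) * ((i + 1) / 2) = m * (i / 2) + if Odd i then m - g else 0 := by
  obtain ⟨k, rfl⟩ := Nat.exists_eq_add_of_le h
  rw [Nat.add_sub_cancel_left]
  rcases Nat.even_or_odd i with he | ho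
  · have h2 : i % 2 = 0 := Nat.even_iff.mp he
    have h1 : (i + 1) / 2 = i / 2 := by omega
    rw [h1, if_neg (by simp [Nat.odd_iff, h2])]
    ring
  · have h2 : i % 2 = 1 := Nat.odd_iff.mp ho
    have h1 : (i + 1) / 2 = i / 2 + 1 := by omega
    rw [h1, if_pos ho]
    ring

lemma myPlusDecomp (P : PartitionData) (g : ℕ → ℕ) (hle : ∀ i, g i ≤ P.mult i) :
    ∑ i ∈ P.partsSet, (g i * ((i + 1) / 2) + (P.mult i - g i) * (i / 2))
      = myC P + ∑ i ∈ myOddParts P, g i := by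
  rw [myC, myOddParts, Finset.sum_filter, ← Finset.sum_add_distrib]
  exact Finset.sum_congr rfl fun i _ => myPtPlus _ _ _ (hle i)

lemma myMinusDecomp (P : PartitionData) (g : ℕ → ℕ) (hle : ∀ i, g i ≤ P.mult i) :
    ∑ i ∈ P.partsSet, (g i * (i / 2) + (P.mult i - g i) * ((i + 1) / 2))
      = myC P + ∑ i ∈ myOddParts P, (P.mult i - g i) := by
  rw [myC, myOddParts, Finset.sum_filter, ← Finset.sum_add_distrib]
  exact Finset.sum_congr rfl fun i _ => myPtMinus _ _ _ (hle i)

lemma myOddCountEq (P : PartitionData) : P.oddCount = ∑ i ∈ myOddParts P, P.mult i := by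
  rw [PartitionData.oddCount,
    Finset.card_eq_sum_card_fiberwise (f := P.l) (t := myOddParts P) ?_]
  · refine Finset.sum_congr rfl fun i hi => ?_
    rw [PartitionData.mult]
    congr 1
    ext j
    have hio : Odd i := (Finset.mem_filter.mp hi).2
    simp only [Finset.mem_filter, Finset.mem_Icc]
    constructor
    · rintro ⟨⟨hj, _⟩, he⟩; exact ⟨hj, he⟩
    · rintro ⟨hj, he⟩; exact ⟨⟨hj, he ▸ hio⟩, he⟩
  · intro j hj
    simp only [Finset.mem_coe, Finset.mem_filter, Finset.mem_Icc] at hj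
    rw [Finset.mem_coe]
    exact Finset.mem_filter.mpr ⟨myMemParts.mpr ⟨j, hj.1.1, hj.1.2, rfl⟩, hj.2⟩

lemma myKeyFacts {P : PartitionData} {p q : ℕ} (T : SYD P p q) :
    myC P + (∑ i ∈ myOddParts P, T.f i) = p ∧
    myC P + (∑ i ∈ myOddParts P, (P.mult i - T.f i)) = q ∧
    (∑ i ∈ myOddParts P, T.f i) + (∑ i ∈ myOddParts P, (P.mult i - T.f i))
      = ∑ i ∈ myOddParts P, P.mult i := by
  refine ⟨?_, ?_, ?_⟩
  · rw [← myPlusDecomp P T.f T.le_mult]; exact T.plus_eq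
  · rw [← myMinusDecomp P T.f T.le_mult]; exact T.minus_eq
  · rw [← Finset.sum_add_distrib]
    exact Finset.sum_congr rfl fun i _ => by have := T.le_mult i; omega

def SYD.myReplace {P : PartitionData} {p q : ℕ} (T : SYD P p q) (g : ℕ → ℕ)
    (hle : ∀ i, g i ≤ P.mult i)
    (hS : ∑ i ∈ myOddParts P, g i = ∑ i ∈ myOddParts P, T.f i) : SYD P p q where
  f := g
  le_mult := hle
  plus_eq := by
    rw [myPlusDecomp P g hle, hS, ← myPlusDecomp P T.f T.le_mult]; exact T.plus_eq
  minus_eq := by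
    rw [myMinusDecomp P g hle]
    have h1 : (∑ i ∈ myOddParts P, (P.mult i - g i)) + ∑ i ∈ myOddParts P, g i
        = ∑ i ∈ myOddParts P, P.mult i := by
      rw [← Finset.sum_add_distrib]
      exact Finset.sum_congr rfl fun i _ => by have := hle i; omega
    obtain ⟨hp, hq, hn⟩ := myKeyFacts T
    omega

lemma myExistsMove {P : PartitionData} {p q : ℕ} (T : SYD P p q) (a b c : ℕ)
    (ha : a ∈ myOddParts P) (hb : b ∈ myOddParts P) (hab : a ≠ b)
    (hfa : c ≤ T.f a) (hfb : T.f b + c ≤ P.mult b) :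
    ∃ T' : SYD P p q, T'.f a = T.f a - c ∧ T'.f b = T.f b + c ∧
      ∀ i, i ≠ a → i ≠ b → T'.f i = T.f i := by
  set g : ℕ → ℕ :=
    fun i => if i = a then T.f a - c else if i = b then T.f b + c else T.f i with hg
  have hga : g a = T.f a - c := by simp [hg]
  have hgb : g b = T.f b + c := by simp [hg, hab.symm]
  have hle : ∀ i, g i ≤ P.mult i := by
    intro i
    by_cases h1 : i = a
    · subst h1; rw [hga]; have := T.le_mult i; omega
    · by_cases h2 : i = b
      · subst h2; rw [hgb]; omega
      · simp only [hg, if_neg h1, if_neg h2]; exact T.le_mult i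
  have hb' : b ∈ (myOddParts P).erase a := Finset.mem_erase.mpr ⟨fun h => hab h.symm, hb⟩
  have hS : ∑ i ∈ myOddParts P, g i = ∑ i ∈ myOddParts P, T.f i := by
    rw [← Finset.add_sum_erase _ g ha, ← Finset.add_sum_erase _ T.f ha,
        ← Finset.add_sum_erase _ g hb', ← Finset.add_sum_erase _ T.f hb']
    have hrest : ∑ i ∈ ((myOddParts P).erase a).erase b, g i
        = ∑ i ∈ ((myOddParts P).erase a).erase b, T.f i := by
      refine Finset.sum_congr rfl fun i hi => ?_
      have h2 : i ≠ b := (Finset.mem_erase.mp hi).1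
      have h1 : i ≠ a := (Finset.mem_erase.mp (Finset.mem_erase.mp hi).2).1
      simp only [hg, if_neg h1, if_neg h2]
    rw [hrest, hga, hgb]
    omega
  exact ⟨T.myReplace g hle hS, hga, hgb, fun i h1 h2 => by
    show g i = T.f i
    simp only [hg, if_neg h1, if_neg h2]⟩

lemma myExistsSetEven {P : PartitionData} {p q : ℕ} (T : SYD P p q) (i₀ v : ℕ)
    (h0 : Even i₀) (hv : v ≤ P.mult i₀) :
    ∃ T' : SYD P p q, T'.f i₀ = v ∧ ∀ i, i ≠ i₀ → T'.f i = T.f i := by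
  refine ⟨T.myReplace (Function.update T.f i₀ v) ?_ ?_,
    Function.update_self _ _ _, fun i h => Function.update_of_ne h _ _⟩
  · intro i
    by_cases h : i = i₀
    · subst h; simpa using hv
    · rw [Function.update_of_ne h]; exact T.le_mult i
  · refine Finset.sum_congr rfl fun i hi => ?_
    have hne : i ≠ i₀ := by
      rintro rfl
      exact (Nat.not_odd_iff_even.mpr h0) ((Finset.mem_filter.mp hi).2)
    rw [Function.update_of_ne hne]

end MyAux

section MyAux2

lemma myUniqEvenFixed {P : PartitionData} {p q : ℕ} (T T' : SYD P p q)
    (hT : ∀ i, Even i → 2 * T.f i = P.mult i) (hT' : ∀ i, Even i → 2 * T'.f i = P.mult i)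
    (hcond : ((P.oddCount : ℤ) = |(p : ℤ) - (q : ℤ)|) ∨
      ∀ x ∈ myOddParts P, ∀ y ∈ myOddParts P, x = y) : T = T' := by
  obtain ⟨hp, hq, hn⟩ := myKeyFacts T
  obtain ⟨hp', hq', hn'⟩ := myKeyFacts T'
  apply mySydExt; funext i
  rcases Nat.even_or_odd i with he | ho
  · have h1 := hT i he; have h2 := hT' i he; omega
  · by_cases hip : i ∈ P.partsSet
    · have hifil : i ∈ myOddParts P := Finset.mem_filter.mpr ⟨hip, ho⟩
      rcases hcond with h1 | h2
      · rw [myOddCountEq] at h1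
        set S := ∑ i ∈ myOddParts P, T.f i with hSdef
        set D := ∑ i ∈ myOddParts P, (P.mult i - T.f i) with hDdef
        set S' := ∑ i ∈ myOddParts P, T'.f i with hSdef'
        set D' := ∑ i ∈ myOddParts P, (P.mult i - T'.f i) with hDdef'
        have hpq : (p : ℤ) - q = (S : ℤ) - D := by
          rw [← hp, ← hq]; push_cast; ring
        have h0 : S = 0 ∨ D = 0 := by
          rcases abs_cases ((p : ℤ) - q) with ⟨hc, _⟩ | ⟨hc, _⟩ <;>
            rw [hc, hpq] at h1 <;> omega
        rcases h0 with h0 | h0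
        · have h0' : S' = 0 := by omega
          have hz := Finset.sum_eq_zero_iff.mp h0 i hifil
          have hz' := Finset.sum_eq_zero_iff.mp h0' i hifil
          omega
        · have h0' : D' = 0 := by omega
          have hz := Finset.sum_eq_zero_iff.mp h0 i hifil
          have hz' := Finset.sum_eq_zero_iff.mp h0' i hifil
          have := T.le_mult i; have := T'.le_mult i
          omega
      · have hsingle : myOddParts P = {i} :=
          Finset.eq_singleton_iff_unique_mem.mpr ⟨hifil, fun x hx => h2 x hx i hifil⟩
        rw [hsingle, Finset.sum_singleton] at hp hp'
        omega
    · rw [myFZero T hip, myFZero T' hip]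

lemma myUniqOddFixed {P : PartitionData} {p q : ℕ} (T T' : SYD P p q)
    (hT : ∀ i, Odd i → 2 * T.f i = P.mult i) (hT' : ∀ i, Odd i → 2 * T'.f i = P.mult i)
    (hall : ∀ j, 1 ≤ j → j ≤ P.len → Odd (P.l j)) : T = T' := by
  apply mySydExt; funext i
  rcases Nat.even_or_odd i with he | ho
  · have hip : i ∉ P.partsSet := by
      intro h
      obtain ⟨j, hj1, hj2, rfl⟩ := myMemParts.mp h
      exact (Nat.not_odd_iff_even.mpr he) (hall j hj1 hj2)
    rw [myFZero T hip, myFZero T' hip]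
  · have h1 := hT i ho; have h2 := hT' i ho; omega

lemma myExistsAB {P : PartitionData} {p q : ℕ} (T : SYD P p q)
    (hne : (P.oddCount : ℤ) ≠ |(p : ℤ) - (q : ℤ)|)
    {x y : ℕ} (hx : x ∈ myOddParts P) (hy : y ∈ myOddParts P) (hxy : x ≠ y) :
    ∃ a ∈ myOddParts P, ∃ b ∈ myOddParts P, a ≠ b ∧ 0 < T.f a ∧ T.f b < P.mult b := by
  obtain ⟨hp, hq, hn⟩ := myKeyFacts T
  rw [myOddCountEq] at hne
  set S := ∑ i ∈ myOddParts P, T.f i with hSdef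
  set D := ∑ i ∈ myOddParts P, (P.mult i - T.f i) with hDdef
  have hpq : (p : ℤ) - q = (S : ℤ) - D := by rw [← hp, ← hq]; push_cast; ring
  have hSD : 0 < S ∧ 0 < D := by
    rcases abs_cases ((p : ℤ) - q) with ⟨hc, _⟩ | ⟨hc, _⟩ <;>
      rw [hc, hpq] at hne <;> constructor <;> omega
  obtain ⟨a, haf, hfa⟩ : ∃ a ∈ myOddParts P, 0 < T.f a := by
    by_contra h
    push_neg at h
    have : S = 0 := Finset.sum_eq_zero fun i hi => by have := h i hi; omega
    omega
  obtain ⟨b, hbf, hfb⟩ : ∃ b ∈ myOddParts P, T.f b < P.mult b := by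
    by_contra h
    push_neg at h
    have : D = 0 := Finset.sum_eq_zero fun i hi => by have := h i hi; omega
    omega
  by_cases hab : a = b
  · subst hab
    obtain ⟨z, hz, hza⟩ : ∃ z ∈ myOddParts P, z ≠ a := by
      by_cases hxa : x = a
      · exact ⟨y, hy, fun h => hxy (hxa.trans h.symm ▸ rfl)⟩
      · exact ⟨x, hx, hxa⟩
    have hmz : 0 < P.mult z := myMultPos (Finset.mem_filter.mp hz).1
    rcases Nat.lt_or_ge 0 (T.f z) with h | h
    · exact ⟨z, hz, a, haf, hza, h, hfb⟩
    · exact ⟨a, haf, z, hz, fun h' => hza h'.symm, hfa, by omega⟩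
  · exact ⟨a, haf, b, hbf, hab, hfa, hfb⟩

end MyAux2

/-- Singleton criteria for `syd_X(λ;p,q)`: for X = BDI, CII it is a singleton
iff the number of odd parts of `λ` equals `|p - q|` or all odd parts of `λ`
have the same length; for X = CI, DIII it is a singleton iff all parts of `λ`
are odd. -/
theorem stmt13 (P : PartitionData) (p q : ℕ) (hn : P.boxSum = p + q) :
    (Nonempty {T : SYD P p q // T.IsBDI} →
      (Nat.card {T : SYD P p q // T.IsBDI} = 1 ↔
        ((P.oddCount : ℤ) = |(p : ℤ) - (q : ℤ)| ∨
          ∀ j j', 1 ≤ j → j ≤ P.len → 1 ≤ j' → j' ≤ P.len →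
            Odd (P.l j) → Odd (P.l j') → P.l j = P.l j'))) ∧
    (Nonempty {T : SYD P p q // T.IsCII} →
      (Nat.card {T : SYD P p q // T.IsCII} = 1 ↔
        ((P.oddCount : ℤ) = |(p : ℤ) - (q : ℤ)| ∨
          ∀ j j', 1 ≤ j → j ≤ P.len → 1 ≤ j' → j' ≤ P.len →
            Odd (P.l j) → Odd (P.l j') → P.l j = P.l j'))) ∧
    (Nonempty {T : SYD P p q // T.IsCI} →
      (Nat.card {T : SYD P p q // T.IsCI} = 1 ↔
        ∀ j, 1 ≤ j → j ≤ P.len → Odd (P.l j))) ∧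
    (Nonempty {T : SYD P p q // T.IsDIII} →
      (Nat.card {T : SYD P p q // T.IsDIII} = 1 ↔
        ∀ j, 1 ≤ j → j ≤ P.len → Odd (P.l j))) := by
  refine ⟨?_, ?_, ?_, ?_⟩
  -- BDI
  · rintro ⟨T0, hT0⟩
    rw [Nat.card_eq_one_iff_unique]
    constructor
    · rintro ⟨hsub, -⟩
      by_contra hc
      push_neg at hc
      obtain ⟨hc1, j, j', hj1, hj2, hj1', hj2', hoj, hoj', hnejj⟩ := hc
      have hx : P.l j ∈ myOddParts P :=
        Finset.mem_filter.mpr ⟨myMemParts.mpr ⟨j, hj1, hj2, rfl⟩, hoj⟩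
      have hy : P.l j' ∈ myOddParts P :=
        Finset.mem_filter.mpr ⟨myMemParts.mpr ⟨j', hj1', hj2', rfl⟩, hoj'⟩
      obtain ⟨a, ha, b, hb, hab, hfa, hfb⟩ := myExistsAB T0 hc1 hx hy hnejj
      obtain ⟨T', hT'a, hT'b, hT'o⟩ := myExistsMove T0 a b 1 ha hb hab hfa (by omega)
      have hoa : Odd a := (Finset.mem_filter.mp ha).2
      have hob : Odd b := (Finset.mem_filter.mp hb).2
      have hT'B : T'.IsBDI := by
        intro i hi
        have h1 : i ≠ a := by rintro rfl; exact (Nat.not_odd_iff_even.mpr hi) hoa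
        have h2 : i ≠ b := by rintro rfl; exact (Nat.not_odd_iff_even.mpr hi) hob
        rw [hT'o i h1 h2]
        exact hT0 i hi
      have heq : T0 = T' :=
        congrArg Subtype.val (hsub.allEq ⟨T0, hT0⟩ ⟨T', hT'B⟩)
      rw [← heq] at hT'a
      omega
    · intro hcond
      have hcond' : ((P.oddCount : ℤ) = |(p : ℤ) - (q : ℤ)|) ∨
          ∀ x ∈ myOddParts P, ∀ y ∈ myOddParts P, x = y := by
        rcases hcond with h | h
        · exact Or.inl h
        · right
          intro x hx y hy
          obtain ⟨hx1, hx2⟩ := Finset.mem_filter.mp hx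
          obtain ⟨jx, hjx1, hjx2, rfl⟩ := myMemParts.mp hx1
          obtain ⟨hy1, hy2⟩ := Finset.mem_filter.mp hy
          obtain ⟨jy, hjy1, hjy2, rfl⟩ := myMemParts.mp hy1
          exact h jx jy hjx1 hjx2 hjy1 hjy2 hx2 hy2
      exact ⟨⟨fun A B => Subtype.ext (myUniqEvenFixed A.1 B.1 A.2 B.2 hcond')⟩, ⟨T0, hT0⟩⟩
  -- CII
  · rintro ⟨T0, hT0⟩
    rw [Nat.card_eq_one_iff_unique]
    constructor
    · rintro ⟨hsub, -⟩
      by_contra hc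
      push_neg at hc
      obtain ⟨hc1, j, j', hj1, hj2, hj1', hj2', hoj, hoj', hnejj⟩ := hc
      have hx : P.l j ∈ myOddParts P :=
        Finset.mem_filter.mpr ⟨myMemParts.mpr ⟨j, hj1, hj2, rfl⟩, hoj⟩
      have hy : P.l j' ∈ myOddParts P :=
        Finset.mem_filter.mpr ⟨myMemParts.mpr ⟨j', hj1', hj2', rfl⟩, hoj'⟩
      obtain ⟨a, ha, b, hb, hab, hfa, hfb⟩ := myExistsAB T0 hc1 hx hy hnejj
      have hoa : Odd a := (Finset.mem_filter.mp ha).2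
      have hob : Odd b := (Finset.mem_filter.mp hb).2
      obtain ⟨hpE, hqE, hev, hod⟩ := hT0
      obtain ⟨t, ht⟩ := (hod a hoa).2
      obtain ⟨u, hu⟩ := (hod b hob).2
      obtain ⟨v, hv⟩ := (hod b hob).1
      obtain ⟨T', hT'a, hT'b, hT'o⟩ := myExistsMove T0 a b 2 ha hb hab (by omega) (by omega)
      have hT'C : T'.IsCII := by
        refine ⟨hpE, hqE, fun i hi => ?_, fun i hi => ?_⟩
        · have h1 : i ≠ a := by rintro rfl; exact (Nat.not_odd_iff_even.mpr hi) hoa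
          have h2 : i ≠ b := by rintro rfl; exact (Nat.not_odd_iff_even.mpr hi) hob
          rw [hT'o i h1 h2]
          exact hev i hi
        · refine ⟨(hod i hi).1, ?_⟩
          by_cases h1 : i = a
          · subst h1; rw [hT'a]; exact ⟨t - 1, by omega⟩
          · by_cases h2 : i = b
            · subst h2; rw [hT'b]; exact ⟨u + 1, by omega⟩
            · rw [hT'o i h1 h2]; exact (hod i hi).2
      have heq : T0 = T' :=
        congrArg Subtype.val (hsub.allEq ⟨T0, ⟨hpE, hqE, hev, hod⟩⟩ ⟨T', hT'C⟩)
      rw [← heq] at hT'a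
      omega
    · intro hcond
      have hcond' : ((P.oddCount : ℤ) = |(p : ℤ) - (q : ℤ)|) ∨
          ∀ x ∈ myOddParts P, ∀ y ∈ myOddParts P, x = y := by
        rcases hcond with h | h
        · exact Or.inl h
        · right
          intro x hx y hy
          obtain ⟨hx1, hx2⟩ := Finset.mem_filter.mp hx
          obtain ⟨jx, hjx1, hjx2, rfl⟩ := myMemParts.mp hx1
          obtain ⟨hy1, hy2⟩ := Finset.mem_filter.mp hy
          obtain ⟨jy, hjy1, hjy2, rfl⟩ := myMemParts.mp hy1
          exact h jx jy hjx1 hjx2 hjy1 hjy2 hx2 hy2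
      exact ⟨⟨fun A B =>
        Subtype.ext (myUniqEvenFixed A.1 B.1 A.2.2.2.1 B.2.2.2.1 hcond')⟩, ⟨T0, hT0⟩⟩
  -- CI
  · rintro ⟨T0, hT0⟩
    rw [Nat.card_eq_one_iff_unique]
    constructor
    · rintro ⟨hsub, -⟩
      by_contra hc
      push_neg at hc
      obtain ⟨j, hj1, hj2, hoj⟩ := hc
      have hlj : 0 < P.l j := (P.pos j hj1).mpr hj2
      have heven : Even (P.l j) := Nat.not_odd_iff_even.mp hoj
      have hmem : P.l j ∈ P.partsSet := myMemParts.mpr ⟨j, hj1, hj2, rfl⟩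
      have hm : 0 < P.mult (P.l j) := myMultPos hmem
      obtain ⟨T', hT'v, hT'o⟩ := myExistsSetEven T0 (P.l j)
        (if T0.f (P.l j) = 0 then 1 else 0) heven (by split <;> omega)
      have hT'C : T'.IsCI := by
        refine ⟨hT0.1, fun i hi => ?_⟩
        have hne : i ≠ P.l j := by rintro rfl; exact (Nat.not_odd_iff_even.mpr heven) hi
        rw [hT'o i hne]
        exact hT0.2 i hi
      have heq : T0 = T' :=
        congrArg Subtype.val (hsub.allEq ⟨T0, hT0⟩ ⟨T', hT'C⟩)
      rw [← heq] at hT'v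
      split at hT'v <;> omega
    · intro hall
      exact ⟨⟨fun A B => Subtype.ext (myUniqOddFixed A.1 B.1 A.2.2 B.2.2 hall)⟩, ⟨T0, hT0⟩⟩
  -- DIII
  · rintro ⟨T0, hT0⟩
    rw [Nat.card_eq_one_iff_unique]
    constructor
    · rintro ⟨hsub, -⟩
      by_contra hc
      push_neg at hc
      obtain ⟨j, hj1, hj2, hoj⟩ := hc
      have hlj : 0 < P.l j := (P.pos j hj1).mpr hj2
      have heven : Even (P.l j) := Nat.not_odd_iff_even.mp hoj
      have hmem : P.l j ∈ P.partsSet := myMemParts.mpr ⟨j, hj1, hj2, rfl⟩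
      have hm : 0 < P.mult (P.l j) := myMultPos hmem
      obtain ⟨u, hu⟩ := (hT0.2.2 (P.l j) heven).1
      obtain ⟨T', hT'v, hT'o⟩ := myExistsSetEven T0 (P.l j)
        (if T0.f (P.l j) = 0 then 2 else 0) heven (by split <;> omega)
      have hT'D : T'.IsDIII := by
        refine ⟨hT0.1, fun i hi => ?_, fun i hi => ?_⟩
        · have hne : i ≠ P.l j := by rintro rfl; exact (Nat.not_odd_iff_even.mpr heven) hi
          rw [hT'o i hne]
          exact hT0.2.1 i hi
        · refine ⟨(hT0.2.2 i hi).1, ?_⟩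
          by_cases hne : i = P.l j
          · subst hne
            rw [hT'v]
            split
            · exact ⟨1, rfl⟩
            · exact ⟨0, rfl⟩
          · rw [hT'o i hne]
            exact (hT0.2.2 i hi).2
      have heq : T0 = T' :=
        congrArg Subtype.val (hsub.allEq ⟨T0, hT0⟩ ⟨T', hT'D⟩)
      rw [← heq] at hT'v
      split at hT'v <;> omega
    · intro hall
      exact ⟨⟨fun A B =>
        Subtype.ext (myUniqOddFixed A.1 B.1 A.2.2.1 B.2.2.1 hall)⟩, ⟨T0, hT0⟩⟩
end

section
/- Let λ be a partition of n = p + q, X ∈ {BDI, CI, CII, DIII}, and assume #syd_X(λ;p,q) ≥ 2. If X = BDI or X = CII, then the graph Γ_X(λ;p,q) has no edges if and only if for every column length h of λ (i.e., every h with λ_h − λ_{h+1} > 0), either λ_h − λ_{h+1} is odd, or λ_h − λ_{h+1} is even and λ_h is even. If X = CI or X = DIII, then Γ_X(λ;p,q) has no edges if and only if for every column length h of λ, either λ_h − λ_{h+1} is odd, or λ_h − λ_{h+1} is even and λ_h is odd. In particular, if λ has distinct column lengths, Γ_X(λ;p,q) has no edges. -/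
open Finset

/-- For every column length `h` of `λ`: the multiplicity `λ_h - λ_{h+1}` is
odd, or it is even and `λ_h` is even. -/
def NoEdgeCondBDI (P : PartitionData) : Prop :=
  ∀ h, 1 ≤ h → P.l (h + 1) < P.l h →
    (Odd (P.l h - P.l (h + 1)) ∨ (Even (P.l h - P.l (h + 1)) ∧ Even (P.l h)))

/-- For every column length `h` of `λ`: the multiplicity `λ_h - λ_{h+1}` is
odd, or it is even and `λ_h` is odd. -/
def NoEdgeCondCI (P : PartitionData) : Prop :=
  ∀ h, 1 ≤ h → P.l (h + 1) < P.l h →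
    (Odd (P.l h - P.l (h + 1)) ∨ (Even (P.l h - P.l (h + 1)) ∧ Odd (P.l h)))

namespace Stmt14Aux

open Finset

variable {P : PartitionData} {p q : ℕ}

lemma anti_le (P : PartitionData) {a b : ℕ} (h1 : 1 ≤ a) (h2 : a ≤ b) : P.l b ≤ P.l a := by
  induction b with
  | zero => omega
  | succ n ih =>
    rcases Nat.lt_or_ge a (n + 1) with h | h
    · exact le_trans (P.anti n (by omega)) (ih (by omega))
    · have : a = n + 1 := by omega
      subst this; exact le_rfl

lemma mem_partsSet_iff {x : ℕ} : x ∈ P.partsSet ↔ ∃ m, 1 ≤ m ∧ m ≤ P.len ∧ P.l m = x := by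
  simp only [PartitionData.partsSet, Finset.mem_image, Finset.mem_Icc]
  constructor
  · rintro ⟨m, ⟨h1, h2⟩, h3⟩; exact ⟨m, h1, h2, h3⟩
  · rintro ⟨m, h1, h2, h3⟩; exact ⟨m, ⟨h1, h2⟩, h3⟩

lemma l_mem_partsSet {h : ℕ} (h1 : 1 ≤ h) (h2 : h ≤ P.len) : P.l h ∈ P.partsSet :=
  mem_partsSet_iff.2 ⟨h, h1, h2, rfl⟩

lemma partsSet_pos {x : ℕ} (hx : x ∈ P.partsSet) : 0 < x := by
  obtain ⟨m, h1, h2, h3⟩ := mem_partsSet_iff.1 hx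
  subst h3; exact (P.pos m h1).2 h2

lemma mult_pos {x : ℕ} (hx : x ∈ P.partsSet) : 0 < P.mult x := by
  obtain ⟨m, h1, h2, h3⟩ := mem_partsSet_iff.1 hx
  apply Finset.card_pos.2
  exact ⟨m, Finset.mem_filter.2 ⟨Finset.mem_Icc.2 ⟨h1, h2⟩, h3⟩⟩

lemma mult_eq_zero {x : ℕ} (hx : x ∉ P.partsSet) : P.mult x = 0 := by
  rw [PartitionData.mult, Finset.card_eq_zero, Finset.filter_eq_empty_iff]
  intro j hj hlj
  exact hx (mem_partsSet_iff.2 ⟨j, (Finset.mem_Icc.1 hj).1, (Finset.mem_Icc.1 hj).2, hlj⟩)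

lemma f_eq_zero (T : SYD P p q) {x : ℕ} (hx : x ∉ P.partsSet) : T.f x = 0 := by
  have := T.le_mult x; rw [mult_eq_zero hx] at this; omega

/-- From a consecutive pair of parts, get the row index `h`. -/
lemma consec_spec {i j : ℕ} (hc : Consec P i j) :
    ∃ h, 1 ≤ h ∧ h + 1 ≤ P.len ∧ P.l h = i ∧ P.l (h + 1) = j := by
  obtain ⟨hi, hj, hji, hbet⟩ := hc
  set s := (Finset.Icc 1 P.len).filter (fun t => P.l t = i) with hs
  have hsne : s.Nonempty := by
    obtain ⟨m, h1, h2, h3⟩ := mem_partsSet_iff.1 hi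
    exact ⟨m, Finset.mem_filter.2 ⟨Finset.mem_Icc.2 ⟨h1, h2⟩, h3⟩⟩
  set h := s.max' hsne with hh
  have hmem : h ∈ s := s.max'_mem hsne
  obtain ⟨hIcc, hlh⟩ := Finset.mem_filter.1 hmem
  obtain ⟨h1, h2⟩ := Finset.mem_Icc.1 hIcc
  obtain ⟨m, hm1, hm2, hm3⟩ := mem_partsSet_iff.1 hj
  have hhlt : h < P.len := by
    rcases Nat.lt_or_ge h P.len with h' | h'
    · exact h'
    · exfalso
      have he : h = P.len := by omega
      have hge : P.l P.len ≤ P.l m := anti_le P hm1 hm2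
      rw [he] at hlh
      omega
  refine ⟨h, h1, by omega, hlh, ?_⟩
  have hmemp : P.l (h + 1) ∈ P.partsSet := l_mem_partsSet (by omega) (by omega)
  have hle : P.l (h + 1) ≤ P.l h := P.anti h h1
  have hne : P.l (h + 1) ≠ i := by
    intro he
    have : h + 1 ∈ s := Finset.mem_filter.2 ⟨Finset.mem_Icc.2 ⟨by omega, by omega⟩, he⟩
    have := s.le_max' _ this
    omega
  have hlt : P.l (h + 1) < i := by omega
  have hle2 : P.l (h + 1) ≤ j := by
    by_contra hcon
    exact hbet _ hmemp ⟨by omega, hlt⟩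
  have hge : j ≤ P.l (h + 1) := by
    have hmh : h < m := by
      by_contra hcon
      have := anti_le P h1 (show h ≤ h + 0 from by omega)
      have h3 : P.l m ≥ P.l h := by
        rcases Nat.lt_or_ge m h with h' | h'
        · exact anti_le P hm1 (by omega)
        · have : m = h := by omega
          subst this; exact le_rfl
      omega
    calc j = P.l m := hm3.symm
      _ ≤ P.l (h + 1) := anti_le P (by omega) (by omega)
  omega

lemma minpart_spec {j : ℕ} (hm : IsMinPart P j) :
    1 ≤ P.len ∧ P.l P.len = j ∧ P.l (P.len + 1) = 0 := by
  obtain ⟨hj, hmin⟩ := hm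
  obtain ⟨m, hm1, hm2, hm3⟩ := mem_partsSet_iff.1 hj
  have hlen1 : 1 ≤ P.len := by omega
  have h1 : P.l P.len ∈ P.partsSet := l_mem_partsSet hlen1 le_rfl
  have h2 : j ≤ P.l P.len := hmin _ h1
  have h3 : P.l P.len ≤ P.l m := anti_le P hm1 hm2
  have h4 : P.l (P.len + 1) = 0 := by
    have := P.pos (P.len + 1) (by omega)
    omega
  omega

lemma consec_of_h {h : ℕ} (h1 : 1 ≤ h) (hlt : P.l (h + 1) < P.l h) (hpos : 0 < P.l (h + 1)) :
    Consec P (P.l h) (P.l (h + 1)) := by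
  have hle : h ≤ P.len := (P.pos h h1).1 (by omega)
  have hle2 : h + 1 ≤ P.len := (P.pos (h + 1) (by omega)).1 hpos
  refine ⟨l_mem_partsSet h1 hle, l_mem_partsSet (by omega) hle2, hlt, ?_⟩
  rintro x hx ⟨hx1, hx2⟩
  obtain ⟨m, hm1, hm2, hm3⟩ := mem_partsSet_iff.1 hx
  rcases Nat.lt_or_ge m (h + 1) with h' | h'
  · have : P.l h ≤ P.l m := by
      rcases Nat.lt_or_ge m h with h'' | h''
      · exact anti_le P hm1 (by omega)
      · have : m = h := by omega
        subst this; exact le_rfl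
    omega
  · have : P.l m ≤ P.l (h + 1) := anti_le P (by omega) h'
    omega

lemma minpart_of_h {h : ℕ} (h1 : 1 ≤ h) (hlt : P.l (h + 1) < P.l h) (hz : P.l (h + 1) = 0) :
    IsMinPart P (P.l h) ∧ h = P.len := by
  have hle : h ≤ P.len := (P.pos h h1).1 (by omega)
  have hlen : h = P.len := by
    have := P.pos (h + 1) (by omega)
    omega
  subst hlen
  refine ⟨⟨l_mem_partsSet h1 le_rfl, ?_⟩, rfl⟩
  intro x hx
  obtain ⟨m, hm1, hm2, hm3⟩ := mem_partsSet_iff.1 hx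
  calc P.l P.len ≤ P.l m := anti_le P hm1 hm2
    _ = x := hm3

end Stmt14Aux
namespace Stmt14Aux

variable {P : PartitionData} {p q : ℕ}

/-- Sum of values at odd parts. -/
def osum (P : PartitionData) (g : ℕ → ℕ) : ℕ :=
  ∑ i ∈ P.partsSet, if Odd i then g i else 0

lemma plusterm (i f m : ℕ) (hfm : f ≤ m) :
    f * ((i + 1) / 2) + (m - f) * (i / 2) = m * (i / 2) + (if Odd i then f else 0) := by
  rcases Nat.even_or_odd i with he | ho
  · have h2 : (i + 1) / 2 = i / 2 := by rw [Nat.even_iff] at he; omega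
    rw [h2, if_neg (by simpa [Nat.not_odd_iff_even] using he)]
    zify [hfm]; ring
  · have h2 : (i + 1) / 2 = i / 2 + 1 := by rw [Nat.odd_iff] at ho; omega
    rw [h2, if_pos ho]
    zify [hfm]; ring

lemma minusterm (i f m : ℕ) (hfm : f ≤ m) :
    f * (i / 2) + (m - f) * ((i + 1) / 2) = m * (i / 2) + (if Odd i then m - f else 0) := by
  rcases Nat.even_or_odd i with he | ho
  · have h2 : (i + 1) / 2 = i / 2 := by rw [Nat.even_iff] at he; omega
    rw [h2, if_neg (by simpa [Nat.not_odd_iff_even] using he)]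
    zify [hfm]; ring
  · have h2 : (i + 1) / 2 = i / 2 + 1 := by rw [Nat.odd_iff] at ho; omega
    rw [h2, if_pos ho]
    zify [hfm]; ring

lemma plus_split (T : SYD P p q) :
    (∑ i ∈ P.partsSet, P.mult i * (i / 2)) + osum P T.f = p := by
  have h1 : ∑ i ∈ P.partsSet, (T.f i * ((i + 1) / 2) + (P.mult i - T.f i) * (i / 2)) =
      (∑ i ∈ P.partsSet, P.mult i * (i / 2)) + osum P T.f := by
    rw [osum, ← Finset.sum_add_distrib]
    exact Finset.sum_congr rfl fun i _ => plusterm i (T.f i) (P.mult i) (T.le_mult i)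
  rw [← h1]
  exact T.plus_eq

lemma minus_split (T : SYD P p q) :
    (∑ i ∈ P.partsSet, P.mult i * (i / 2)) +
      (∑ i ∈ P.partsSet, if Odd i then P.mult i - T.f i else 0) = q := by
  have h1 : ∑ i ∈ P.partsSet, (T.f i * (i / 2) + (P.mult i - T.f i) * ((i + 1) / 2)) =
      (∑ i ∈ P.partsSet, P.mult i * (i / 2)) +
        (∑ i ∈ P.partsSet, if Odd i then P.mult i - T.f i else 0) := by
    rw [← Finset.sum_add_distrib]
    exact Finset.sum_congr rfl fun i _ => minusterm i (T.f i) (P.mult i) (T.le_mult i)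
  rw [← h1]
  exact T.minus_eq

lemma osum_eq (T T' : SYD P p q) : osum P T.f = osum P T'.f := by
  have h1 := plus_split T
  have h2 := plus_split T'
  omega

/-- Build a new SYD from a function with the same odd-part sum. -/
def mkSYD (T : SYD P p q) (g : ℕ → ℕ) (hle : ∀ x, g x ≤ P.mult x)
    (hsum : osum P g = osum P T.f) : SYD P p q where
  f := g
  le_mult := hle
  plus_eq := by
    have h1 : ∑ i ∈ P.partsSet, (g i * ((i + 1) / 2) + (P.mult i - g i) * (i / 2)) =
        (∑ i ∈ P.partsSet, P.mult i * (i / 2)) + osum P g := by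
      rw [osum, ← Finset.sum_add_distrib]
      exact Finset.sum_congr rfl fun i _ => plusterm i (g i) (P.mult i) (hle i)
    rw [h1, hsum]
    exact plus_split T
  minus_eq := by
    have h1 : ∑ i ∈ P.partsSet, (g i * (i / 2) + (P.mult i - g i) * ((i + 1) / 2)) =
        (∑ i ∈ P.partsSet, P.mult i * (i / 2)) +
          (∑ i ∈ P.partsSet, if Odd i then P.mult i - g i else 0) := by
      rw [← Finset.sum_add_distrib]
      exact Finset.sum_congr rfl fun i _ => minusterm i (g i) (P.mult i) (hle i)
    have e1 : osum P g + (∑ i ∈ P.partsSet, if Odd i then P.mult i - g i else 0) =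
        ∑ i ∈ P.partsSet, (if Odd i then P.mult i else 0) := by
      rw [osum, ← Finset.sum_add_distrib]
      refine Finset.sum_congr rfl fun i _ => ?_
      have := hle i
      split_ifs <;> omega
    have e2 : osum P T.f + (∑ i ∈ P.partsSet, if Odd i then P.mult i - T.f i else 0) =
        ∑ i ∈ P.partsSet, (if Odd i then P.mult i else 0) := by
      rw [osum, ← Finset.sum_add_distrib]
      refine Finset.sum_congr rfl fun i _ => ?_
      have := T.le_mult i
      split_ifs <;> omega
    have key : (∑ i ∈ P.partsSet, if Odd i then P.mult i - g i else 0) =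
        ∑ i ∈ P.partsSet, if Odd i then P.mult i - T.f i else 0 := by omega
    rw [h1, key]
    exact minus_split T

@[simp] lemma mkSYD_f (T : SYD P p q) (g : ℕ → ℕ) (hle : ∀ x, g x ≤ P.mult x)
    (hsum : osum P g = osum P T.f) : (mkSYD T g hle hsum).f = g := rfl

lemma osum_upd1 (f : ℕ → ℕ) {x : ℕ} (a : ℕ) (hx : x ∈ P.partsSet)
    (hab : (if Odd x then a else 0) = (if Odd x then f x else 0)) :
    osum P (fun t => if t = x then a else f t) = osum P f := by
  unfold osum
  rw [← Finset.add_sum_erase _ _ hx, ← Finset.add_sum_erase _ (fun i => if Odd i then f i else 0) hx]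
  have hrest : ∑ i ∈ P.partsSet.erase x, (if Odd i then (if i = x then a else f i) else 0) =
      ∑ i ∈ P.partsSet.erase x, (if Odd i then f i else 0) := by
    refine Finset.sum_congr rfl fun t ht => ?_
    rw [if_neg (Finset.ne_of_mem_erase ht)]
  rw [hrest]
  simp only [eq_self_iff_true, if_true]
  split_ifs at hab ⊢ <;> omega

lemma osum_upd2 (f : ℕ → ℕ) {x y : ℕ} (a b : ℕ) (hx : x ∈ P.partsSet) (hy : y ∈ P.partsSet)
    (hxy : x ≠ y)
    (hab : (if Odd x then a else 0) + (if Odd y then b else 0) =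
      (if Odd x then f x else 0) + (if Odd y then f y else 0)) :
    osum P (fun t => if t = x then a else if t = y then b else f t) = osum P f := by
  unfold osum
  have hy' : y ∈ P.partsSet.erase x := Finset.mem_erase.2 ⟨fun h => hxy h.symm, hy⟩
  rw [← Finset.add_sum_erase _ _ hx, ← Finset.add_sum_erase _ (fun i => if Odd i then f i else 0) hx,
    ← Finset.add_sum_erase _ _ hy', ← Finset.add_sum_erase _ (fun i => if Odd i then f i else 0) hy']
  have hrest : ∑ i ∈ (P.partsSet.erase x).erase y,
      (if Odd i then (if i = x then a else if i = y then b else f i) else 0) =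
      ∑ i ∈ (P.partsSet.erase x).erase y, (if Odd i then f i else 0) := by
    refine Finset.sum_congr rfl fun t ht => ?_
    have ht1 : t ≠ y := Finset.ne_of_mem_erase ht
    have ht2 : t ≠ x := Finset.ne_of_mem_erase (Finset.mem_of_mem_erase ht)
    rw [if_neg ht2, if_neg ht1]
  rw [hrest]
  simp only [eq_self_iff_true, if_true, if_neg (Ne.symm hxy)]
  split_ifs at hab ⊢ <;> omega

lemma exists_lt_odd (A B : SYD P p q) {w0 : ℕ} (hw0 : w0 ∈ P.partsSet) (ho : Odd w0)
    (hlt : B.f w0 < A.f w0) : ∃ w, w ∈ P.partsSet ∧ Odd w ∧ A.f w < B.f w := by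
  by_contra hcon
  push_neg at hcon
  have hsum : osum P A.f = osum P B.f := osum_eq A B
  have : osum P B.f < osum P A.f := by
    apply Finset.sum_lt_sum
    · intro i hi
      by_cases h : Odd i
      · simp only [if_pos h]
        exact hcon i hi h
      · simp [h]
    · exact ⟨w0, hw0, by simp only [if_pos ho]; exact hlt⟩
  omega

lemma exists_diff (A B : SYD P p q) (hAB : A.f ≠ B.f)
    (heven : ∀ x, Even x → A.f x = B.f x) :
    ∃ w, w ∈ P.partsSet ∧ Odd w ∧ A.f w ≠ B.f w := by
  have : ∃ x, A.f x ≠ B.f x := by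
    by_contra h
    push_neg at h
    exact hAB (funext h)
  obtain ⟨x, hx⟩ := this
  have hxp : x ∈ P.partsSet := by
    by_contra h
    rw [f_eq_zero A h, f_eq_zero B h] at hx
    exact hx rfl
  have hxo : Odd x := by
    rcases Nat.even_or_odd x with he | ho
    · exact absurd (heven x he) hx
    · exact ho
  exact ⟨x, hxp, hxo, hx⟩

lemma syd_eq_of_f {A B : SYD P p q} (h : A.f = B.f) : A = B := by
  cases A; cases B; simp only at h; subst h; rfl

lemma graph_eq_bot_iff {V : Type*} (G : SimpleGraph V) : G = ⊥ ↔ ∀ a b, ¬ G.Adj a b := by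
  constructor
  · rintro rfl a b
    simp
  · intro h
    ext a b
    simp [h a b]

lemma not_bot_of_pair {c : ℕ} {Pr : SYD P p q → Prop} (T T' : SYD P p q) (hT : Pr T)
    (hT' : Pr T') (hadj : AdjRel P c T T') (hne : T ≠ T') : orbitGraphX P p q c Pr ≠ ⊥ := by
  intro hbot
  rw [graph_eq_bot_iff] at hbot
  apply hbot ⟨T, hT⟩ ⟨T', hT'⟩
  rw [orbitGraphX, SimpleGraph.fromRel_adj]
  exact ⟨fun h => hne (congrArg Subtype.val h), Or.inl hadj⟩

lemma eq_bot_of_no_adj {c : ℕ} {Pr : SYD P p q → Prop}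
    (h : ∀ T T' : SYD P p q, Pr T → Pr T' → ¬ AdjRel P c T T') :
    orbitGraphX P p q c Pr = ⊥ := by
  rw [graph_eq_bot_iff]
  intro a b
  rw [orbitGraphX, SimpleGraph.fromRel_adj]
  rintro ⟨hne, h1 | h1⟩
  · exact h _ _ a.2 b.2 h1
  · exact h _ _ b.2 a.2 h1

end Stmt14Aux
namespace Stmt14Aux

variable {P : PartitionData} {p q : ℕ}

/-- No adjacency for BDI/CII given the column condition. -/
lemma no_adj_odd {c : ℕ} (hc : 0 < c) (T T' : SYD P p q)
    (hT : ∀ x, Even x → 2 * T.f x = P.mult x) (hT' : ∀ x, Even x → 2 * T'.f x = P.mult x)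
    (cond : NoEdgeCondBDI P) : ¬ AdjRel P c T T' := by
  rintro (⟨i, j, hcon, hout, hmv⟩ | ⟨j, hmin, hout, hmv⟩)
  · have hnei : T.f i ≠ T'.f i := by rcases hmv with ⟨h1, _⟩ | ⟨h1, _⟩ <;> omega
    have hnej : T.f j ≠ T'.f j := by rcases hmv with ⟨_, h1⟩ | ⟨_, h1⟩ <;> omega
    have hoi : Odd i := by
      by_contra h
      rw [Nat.not_odd_iff_even] at h
      have := hT i h; have := hT' i h; omega
    have hoj : Odd j := by
      by_contra h
      rw [Nat.not_odd_iff_even] at h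
      have := hT j h; have := hT' j h; omega
    obtain ⟨h, h1, hlen, hli, hlj⟩ := consec_spec hcon
    have hlt : P.l (h + 1) < P.l h := by rw [hli, hlj]; exact hcon.2.2.1
    rcases cond h h1 hlt with hodd | ⟨_, heven⟩
    · rw [hli, hlj] at hodd
      rw [Nat.odd_iff] at hodd hoi hoj
      have := hcon.2.2.1
      omega
    · rw [hli] at heven
      rw [Nat.odd_iff] at hoi; rw [Nat.even_iff] at heven; omega
  · have hne : T.f j ≠ T'.f j := by rcases hmv with h1 | h1 <;> omega
    rcases Nat.even_or_odd j with he | ho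
    · exact hne (by have := hT j he; have := hT' j he; omega)
    · have hj : j ∈ P.partsSet := hmin.1
      have hsum := osum_eq T T'
      have e1 : osum P T.f = T.f j + ∑ i ∈ P.partsSet.erase j, (if Odd i then T.f i else 0) := by
        rw [osum, ← Finset.add_sum_erase _ _ hj, if_pos ho]
      have e2 : osum P T'.f = T'.f j + ∑ i ∈ P.partsSet.erase j, (if Odd i then T'.f i else 0) := by
        rw [osum, ← Finset.add_sum_erase _ _ hj, if_pos ho]
      have hrest : ∑ i ∈ P.partsSet.erase j, (if Odd i then T.f i else 0) =
          ∑ i ∈ P.partsSet.erase j, (if Odd i then T'.f i else 0) := by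
        refine Finset.sum_congr rfl fun t ht => ?_
        rw [hout t (Finset.ne_of_mem_erase ht)]
      omega

/-- No adjacency for CI/DIII given the column condition. -/
lemma no_adj_even {c : ℕ} (hc : 0 < c) (T T' : SYD P p q)
    (hT : ∀ x, Odd x → 2 * T.f x = P.mult x) (hT' : ∀ x, Odd x → 2 * T'.f x = P.mult x)
    (cond : NoEdgeCondCI P) : ¬ AdjRel P c T T' := by
  rintro (⟨i, j, hcon, hout, hmv⟩ | ⟨j, hmin, hout, hmv⟩)
  · have hnei : T.f i ≠ T'.f i := by rcases hmv with ⟨h1, _⟩ | ⟨h1, _⟩ <;> omega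
    have hnej : T.f j ≠ T'.f j := by rcases hmv with ⟨_, h1⟩ | ⟨_, h1⟩ <;> omega
    have hoi : Even i := by
      by_contra h
      rw [Nat.not_even_iff_odd] at h
      have := hT i h; have := hT' i h; omega
    have hoj : Even j := by
      by_contra h
      rw [Nat.not_even_iff_odd] at h
      have := hT j h; have := hT' j h; omega
    obtain ⟨h, h1, hlen, hli, hlj⟩ := consec_spec hcon
    have hlt : P.l (h + 1) < P.l h := by rw [hli, hlj]; exact hcon.2.2.1
    rcases cond h h1 hlt with hodd | ⟨_, hoddl⟩
    · rw [hli, hlj] at hodd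
      rw [Nat.odd_iff] at hodd
      rw [Nat.even_iff] at hoi hoj
      have := hcon.2.2.1
      omega
    · rw [hli] at hoddl
      rw [Nat.odd_iff] at hoddl; rw [Nat.even_iff] at hoi; omega
  · have hne : T.f j ≠ T'.f j := by rcases hmv with h1 | h1 <;> omega
    rcases Nat.even_or_odd j with he | ho
    · obtain ⟨hlen, hlj, hl0⟩ := minpart_spec hmin
      have hjpos : 0 < j := partsSet_pos hmin.1
      have hlt : P.l (P.len + 1) < P.l P.len := by omega
      rcases cond P.len hlen hlt with hodd | ⟨_, hoddl⟩
      · rw [hlj, hl0] at hodd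
        rw [Nat.odd_iff] at hodd; rw [Nat.even_iff] at he; omega
      · rw [hlj] at hoddl
        rw [Nat.odd_iff] at hoddl; rw [Nat.even_iff] at he; omega
    · exact hne (by have := hT j ho; have := hT' j ho; omega)

end Stmt14Aux
namespace Stmt14Aux

variable {P : PartitionData} {p q : ℕ}

/-- If some admissible diagram can move `c` up at `i` and down at `j` (consecutive odd
parts), the graph has an edge. -/
lemma edge_of_good {c : ℕ} (hc : 0 < c) {Pr : SYD P p q → Prop} {i j : ℕ}
    (hcon : Consec P i j) (hoi : Odd i) (hoj : Odd j)
    (S : SYD P p q) (hS : Pr S) (hup : S.f i + c ≤ P.mult i) (hdown : c ≤ S.f j)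
    (hPr : ∀ T : SYD P p q,
      (∀ x, T.f x = S.f x ∨ (Odd x ∧ (T.f x = S.f x + c ∨ T.f x + c = S.f x))) → Pr T) :
    orbitGraphX P p q c Pr ≠ ⊥ := by
  have hij : i ≠ j := (hcon.2.2.1).ne'
  set g := fun t => if t = i then S.f i + c else if t = j then S.f j - c else S.f t with hg
  have hgi : g i = S.f i + c := by simp [hg]
  have hgj : g j = S.f j - c := by simp [hg, Ne.symm hij]
  have hgx : ∀ x, x ≠ i → x ≠ j → g x = S.f x := fun x h1 h2 => by simp [hg, h1, h2]
  have hle : ∀ x, g x ≤ P.mult x := by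
    intro x
    by_cases h1 : x = i
    · rw [h1, hgi]; exact hup
    · by_cases h2 : x = j
      · rw [h2, hgj]; have := S.le_mult j; omega
      · rw [hgx x h1 h2]; exact S.le_mult x
  have hsum : osum P g = osum P S.f := by
    apply osum_upd2 S.f _ _ hcon.1 hcon.2.1 hij
    rw [if_pos hoi, if_pos hoj, if_pos hoi, if_pos hoj]
    omega
  set S' := mkSYD S g hle hsum with hS'def
  have hfS' : ∀ x, S'.f x = g x := fun x => rfl
  have hS'P : Pr S' := by
    apply hPr
    intro x
    by_cases h1 : x = i
    · subst h1; exact Or.inr ⟨hoi, Or.inl (by rw [hfS', hgi])⟩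
    · by_cases h2 : x = j
      · subst h2; exact Or.inr ⟨hoj, Or.inr (by rw [hfS', hgj]; omega)⟩
      · exact Or.inl (by rw [hfS', hgx x h1 h2])
  apply not_bot_of_pair S S' hS hS'P
  · left
    refine ⟨i, j, hcon, ?_, ?_⟩
    · intro x hx1 hx2
      rw [hfS', hgx x hx1 hx2]
    · exact Or.inr ⟨by rw [hfS', hgi], by rw [hfS', hgj]; omega⟩
  · intro he
    have h0 : S.f i = S'.f i := by rw [he]
    rw [hfS', hgi] at h0; omega

/-- Mirror version: move down at `i` and up at `j`. -/
lemma edge_of_good' {c : ℕ} (hc : 0 < c) {Pr : SYD P p q → Prop} {i j : ℕ}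
    (hcon : Consec P i j) (hoi : Odd i) (hoj : Odd j)
    (S : SYD P p q) (hS : Pr S) (hup : c ≤ S.f i) (hdown : S.f j + c ≤ P.mult j)
    (hPr : ∀ T : SYD P p q,
      (∀ x, T.f x = S.f x ∨ (Odd x ∧ (T.f x = S.f x + c ∨ T.f x + c = S.f x))) → Pr T) :
    orbitGraphX P p q c Pr ≠ ⊥ := by
  have hij : i ≠ j := (hcon.2.2.1).ne'
  set g := fun t => if t = i then S.f i - c else if t = j then S.f j + c else S.f t with hg
  have hgi : g i = S.f i - c := by simp [hg]
  have hgj : g j = S.f j + c := by simp [hg, Ne.symm hij]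
  have hgx : ∀ x, x ≠ i → x ≠ j → g x = S.f x := fun x h1 h2 => by simp [hg, h1, h2]
  have hle : ∀ x, g x ≤ P.mult x := by
    intro x
    by_cases h1 : x = i
    · rw [h1, hgi]; have := S.le_mult i; omega
    · by_cases h2 : x = j
      · rw [h2, hgj]; exact hdown
      · rw [hgx x h1 h2]; exact S.le_mult x
  have hsum : osum P g = osum P S.f := by
    apply osum_upd2 S.f _ _ hcon.1 hcon.2.1 hij
    rw [if_pos hoi, if_pos hoj, if_pos hoi, if_pos hoj]
    omega
  set S' := mkSYD S g hle hsum with hS'def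
  have hfS' : ∀ x, S'.f x = g x := fun x => rfl
  have hS'P : Pr S' := by
    apply hPr
    intro x
    by_cases h1 : x = i
    · subst h1; exact Or.inr ⟨hoi, Or.inr (by rw [hfS', hgi]; omega)⟩
    · by_cases h2 : x = j
      · subst h2; exact Or.inr ⟨hoj, Or.inl (by rw [hfS', hgj])⟩
      · exact Or.inl (by rw [hfS', hgx x h1 h2])
  apply not_bot_of_pair S S' hS hS'P
  · left
    refine ⟨i, j, hcon, ?_, ?_⟩
    · intro x hx1 hx2
      rw [hfS', hgx x hx1 hx2]
    · exact Or.inl ⟨by rw [hfS', hgi]; omega, by rw [hfS', hgj]⟩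
  · intro he
    have h0 : S.f j = S'.f j := by rw [he]
    rw [hfS', hgj] at h0; omega

/-- Edge from a move at an even minimal part. -/
lemma edge_of_min {c : ℕ} (hc : 0 < c) {Pr : SYD P p q → Prop} {j : ℕ}
    (hmin : IsMinPart P j) (hej : Even j) (S : SYD P p q) (hS : Pr S) (hcle : c ≤ P.mult j)
    (hPr : ∀ T : SYD P p q, (∀ x, x ≠ j → T.f x = S.f x) → (T.f j = 0 ∨ T.f j = c) → Pr T) :
    orbitGraphX P p q c Pr ≠ ⊥ := by
  have hnodd : ¬ Odd j := by rwa [Nat.not_odd_iff_even]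
  set g1 := fun t => if t = j then 0 else S.f t with hg1
  set g2 := fun t => if t = j then c else S.f t with hg2
  have hg1j : g1 j = 0 := by simp [hg1]
  have hg2j : g2 j = c := by simp [hg2]
  have hg1x : ∀ x, x ≠ j → g1 x = S.f x := fun x h => by simp [hg1, h]
  have hg2x : ∀ x, x ≠ j → g2 x = S.f x := fun x h => by simp [hg2, h]
  have hle1 : ∀ x, g1 x ≤ P.mult x := by
    intro x
    by_cases h1 : x = j
    · rw [h1, hg1j]; omega
    · rw [hg1x x h1]; exact S.le_mult x
  have hle2 : ∀ x, g2 x ≤ P.mult x := by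
    intro x
    by_cases h1 : x = j
    · rw [h1, hg2j]; exact hcle
    · rw [hg2x x h1]; exact S.le_mult x
  have hsum1 : osum P g1 = osum P S.f := by
    apply osum_upd1 S.f _ hmin.1
    rw [if_neg hnodd, if_neg hnodd]
  have hsum2 : osum P g2 = osum P S.f := by
    apply osum_upd1 S.f _ hmin.1
    rw [if_neg hnodd, if_neg hnodd]
  set T1 := mkSYD S g1 hle1 hsum1
  set T2 := mkSYD S g2 hle2 hsum2
  have hf1 : ∀ x, T1.f x = g1 x := fun x => rfl
  have hf2 : ∀ x, T2.f x = g2 x := fun x => rfl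
  have hT1 : Pr T1 := hPr T1 (fun x hx => by rw [hf1, hg1x x hx]) (Or.inl (by rw [hf1, hg1j]))
  have hT2 : Pr T2 := hPr T2 (fun x hx => by rw [hf2, hg2x x hx]) (Or.inr (by rw [hf2, hg2j]))
  apply not_bot_of_pair T1 T2 hT1 hT2
  · right
    refine ⟨j, hmin, ?_, ?_⟩
    · intro x hx
      rw [hf1, hf2, hg1x x hx, hg2x x hx]
    · exact Or.inr (by rw [hf1, hf2, hg1j, hg2j]; omega)
  · intro he
    have h0 : T1.f j = T2.f j := by rw [he]
    rw [hf1, hf2, hg1j, hg2j] at h0; omega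

end Stmt14Aux
namespace Stmt14Aux

variable {P : PartitionData} {p q : ℕ}

/-- Even-part version of `edge_of_good`. -/
lemma edge_of_goodE {c : ℕ} (hc : 0 < c) {Pr : SYD P p q → Prop} {i j : ℕ}
    (hcon : Consec P i j) (hei : Even i) (hej : Even j)
    (S : SYD P p q) (hS : Pr S) (hup : S.f i + c ≤ P.mult i) (hdown : c ≤ S.f j)
    (hPr : ∀ T : SYD P p q,
      (∀ x, T.f x = S.f x ∨ (Even x ∧ (T.f x = S.f x + c ∨ T.f x + c = S.f x))) → Pr T) :
    orbitGraphX P p q c Pr ≠ ⊥ := by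
  have hij : i ≠ j := (hcon.2.2.1).ne'
  have hnoi : ¬ Odd i := by rwa [Nat.not_odd_iff_even]
  have hnoj : ¬ Odd j := by rwa [Nat.not_odd_iff_even]
  set g := fun t => if t = i then S.f i + c else if t = j then S.f j - c else S.f t with hg
  have hgi : g i = S.f i + c := by simp [hg]
  have hgj : g j = S.f j - c := by simp [hg, Ne.symm hij]
  have hgx : ∀ x, x ≠ i → x ≠ j → g x = S.f x := fun x h1 h2 => by simp [hg, h1, h2]
  have hle : ∀ x, g x ≤ P.mult x := by
    intro x
    by_cases h1 : x = i
    · rw [h1, hgi]; exact hup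
    · by_cases h2 : x = j
      · rw [h2, hgj]; have := S.le_mult j; omega
      · rw [hgx x h1 h2]; exact S.le_mult x
  have hsum : osum P g = osum P S.f := by
    apply osum_upd2 S.f _ _ hcon.1 hcon.2.1 hij
    rw [if_neg hnoi, if_neg hnoj, if_neg hnoi, if_neg hnoj]
  set S' := mkSYD S g hle hsum with hS'def
  have hfS' : ∀ x, S'.f x = g x := fun x => rfl
  have hS'P : Pr S' := by
    apply hPr
    intro x
    by_cases h1 : x = i
    · subst h1; exact Or.inr ⟨hei, Or.inl (by rw [hfS', hgi])⟩
    · by_cases h2 : x = j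
      · subst h2; exact Or.inr ⟨hej, Or.inr (by rw [hfS', hgj]; omega)⟩
      · exact Or.inl (by rw [hfS', hgx x h1 h2])
  apply not_bot_of_pair S S' hS hS'P
  · left
    refine ⟨i, j, hcon, ?_, ?_⟩
    · intro x hx1 hx2
      rw [hfS', hgx x hx1 hx2]
    · exact Or.inr ⟨by rw [hfS', hgi], by rw [hfS', hgj]; omega⟩
  · intro he
    have h0 : S.f i = S'.f i := by rw [he]
    rw [hfS', hgi] at h0; omega

/-- The main existence-of-edge lemma for the odd-part families (BDI, CII). -/
lemma not_bot_odd {c : ℕ} (hc : 0 < c) {Pr : SYD P p q → Prop}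
    (A B : SYD P p q) (hA : Pr A) (hB : Pr B) (hABf : A.f ≠ B.f)
    (hfix : ∀ T : SYD P p q, Pr T → ∀ x, Even x → 2 * T.f x = P.mult x)
    (hdvd : ∀ T : SYD P p q, Pr T → ∀ x, Odd x → c ∣ T.f x ∧ c ∣ P.mult x)
    (hPr : ∀ S T : SYD P p q, Pr S →
      (∀ x, T.f x = S.f x ∨ (Odd x ∧ (T.f x = S.f x + c ∨ T.f x + c = S.f x))) → Pr T)
    {i j : ℕ} (hcon : Consec P i j) (hoi : Odd i) (hoj : Odd j) :
    orbitGraphX P p q c Pr ≠ ⊥ := by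
  have hip : i ∈ P.partsSet := hcon.1
  have hjp : j ∈ P.partsSet := hcon.2.1
  have hij : i ≠ j := (hcon.2.2.1).ne'
  have hmi : 0 < P.mult i := mult_pos hip
  have hmj : 0 < P.mult j := mult_pos hjp
  have hci : c ≤ P.mult i := Nat.le_of_dvd hmi (hdvd A hA i hoi).2
  have hcj : c ≤ P.mult j := Nat.le_of_dvd hmj (hdvd A hA j hoj).2
  have round : ∀ a m : ℕ, c ∣ a → c ∣ m → a ≤ m → a ≠ m → a + c ≤ m := by
    intro a m ha hm hle hne
    have h1 : c ∣ m - a := Nat.dvd_sub hm ha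
    have h2 : 0 < m - a := by omega
    have := Nat.le_of_dvd h2 h1
    omega
  have heven : ∀ x, Even x → A.f x = B.f x := by
    intro x hx
    have := hfix A hA x hx; have := hfix B hB x hx; omega
  obtain ⟨w0, hw0p, hw0o, hw0ne⟩ := exists_diff A B hABf heven
  have hup : ∃ w, w ∈ P.partsSet ∧ Odd w ∧ A.f w < B.f w := by
    rcases Nat.lt_or_ge (A.f w0) (B.f w0) with h | h
    · exact ⟨w0, hw0p, hw0o, h⟩
    · exact exists_lt_odd A B hw0p hw0o (by omega)
  have hdown : ∃ v, v ∈ P.partsSet ∧ Odd v ∧ B.f v < A.f v := by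
    obtain ⟨w, hwp, hwo, hwlt⟩ := hup
    exact exists_lt_odd B A hwp hwo hwlt
  by_cases hg1 : A.f i + c ≤ P.mult i ∧ c ≤ A.f j
  · exact edge_of_good hc hcon hoi hoj A hA hg1.1 hg1.2 (fun T hT => hPr A T hA hT)
  by_cases hg2 : c ≤ A.f i ∧ A.f j + c ≤ P.mult j
  · exact edge_of_good' hc hcon hoi hoj A hA hg2.1 hg2.2 (fun T hT => hPr A T hA hT)
  have hb1 : A.f i = P.mult i ∨ A.f j = 0 := by
    by_contra hcc
    push_neg at hcc
    exact hg1 ⟨round _ _ (hdvd A hA i hoi).1 (hdvd A hA i hoi).2 (A.le_mult i) hcc.1,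
      Nat.le_of_dvd (Nat.pos_of_ne_zero hcc.2) (hdvd A hA j hoj).1⟩
  have hb2 : A.f i = 0 ∨ A.f j = P.mult j := by
    by_contra hcc
    push_neg at hcc
    exact hg2 ⟨Nat.le_of_dvd (Nat.pos_of_ne_zero hcc.1) (hdvd A hA i hoi).1,
      round _ _ (hdvd A hA j hoj).1 (hdvd A hA j hoj).2 (A.le_mult j) hcc.2⟩
  rcases hb1 with hii | hj0 <;> rcases hb2 with hi0 | hjm
  · omega
  · -- A.f i = mult i, A.f j = mult j : trade down at i, up at w
    obtain ⟨w, hwp, hwo, hwlt⟩ := hup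
    have hwgap : A.f w + c ≤ B.f w :=
      round _ _ (hdvd A hA w hwo).1 (hdvd B hB w hwo).1 (by omega) (by omega)
    have hwi : w ≠ i := by
      intro he; subst he
      have := B.le_mult w; omega
    have hwj : w ≠ j := by
      intro he; subst he
      have := B.le_mult w; omega
    set g := fun t => if t = i then P.mult i - c else if t = w then A.f w + c else A.f t with hg
    have hgi : g i = P.mult i - c := by simp [hg]
    have hgw : g w = A.f w + c := by simp [hg, hwi]
    have hgx : ∀ x, x ≠ i → x ≠ w → g x = A.f x := fun x h1 h2 => by simp [hg, h1, h2]
    have hle : ∀ x, g x ≤ P.mult x := by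
      intro x
      by_cases h1 : x = i
      · rw [h1, hgi]; omega
      · by_cases h2 : x = w
        · rw [h2, hgw]; have := B.le_mult w; omega
        · rw [hgx x h1 h2]; exact A.le_mult x
    have hsum : osum P g = osum P A.f := by
      apply osum_upd2 A.f _ _ hip hwp (Ne.symm hwi)
      rw [if_pos hoi, if_pos hwo, if_pos hoi, if_pos hwo]
      omega
    set S := mkSYD A g hle hsum with hSdef
    have hfS : ∀ x, S.f x = g x := fun x => rfl
    have hSP : Pr S := by
      apply hPr A S hA
      intro x
      by_cases h1 : x = i
      · subst h1; exact Or.inr ⟨hoi, Or.inr (by rw [hfS, hgi]; omega)⟩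
      · by_cases h2 : x = w
        · subst h2; exact Or.inr ⟨hwo, Or.inl (by rw [hfS, hgw])⟩
        · exact Or.inl (by rw [hfS, hgx x h1 h2])
    apply edge_of_good hc hcon hoi hoj S hSP ?_ ?_ (fun T hT => hPr S T hSP hT)
    · rw [hfS, hgi]; omega
    · rw [hfS, hgx j (Ne.symm hij) (Ne.symm hwj)]; omega
  · -- A.f i = 0, A.f j = 0 : trade up at j, down at v
    obtain ⟨v, hvp, hvo, hvlt⟩ := hdown
    have hvgap : B.f v + c ≤ A.f v :=
      round _ _ (hdvd B hB v hvo).1 (hdvd A hA v hvo).1 (by omega) (by omega)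
    have hvi : v ≠ i := by intro he; subst he; omega
    have hvj : v ≠ j := by intro he; subst he; omega
    set g := fun t => if t = j then c else if t = v then A.f v - c else A.f t with hg
    have hgj : g j = c := by simp [hg]
    have hgv : g v = A.f v - c := by simp [hg, hvj]
    have hgx : ∀ x, x ≠ j → x ≠ v → g x = A.f x := fun x h1 h2 => by simp [hg, h1, h2]
    have hle : ∀ x, g x ≤ P.mult x := by
      intro x
      by_cases h1 : x = j
      · rw [h1, hgj]; exact hcj
      · by_cases h2 : x = v
        · rw [h2, hgv]; have := A.le_mult v; omega
        · rw [hgx x h1 h2]; exact A.le_mult x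
    have hsum : osum P g = osum P A.f := by
      apply osum_upd2 A.f _ _ hjp hvp (Ne.symm hvj)
      rw [if_pos hoj, if_pos hvo, if_pos hoj, if_pos hvo]
      omega
    set S := mkSYD A g hle hsum with hSdef
    have hfS : ∀ x, S.f x = g x := fun x => rfl
    have hSP : Pr S := by
      apply hPr A S hA
      intro x
      by_cases h1 : x = j
      · subst h1; exact Or.inr ⟨hoj, Or.inl (by rw [hfS, hgj]; omega)⟩
      · by_cases h2 : x = v
        · subst h2; exact Or.inr ⟨hvo, Or.inr (by rw [hfS, hgv]; omega)⟩
        · exact Or.inl (by rw [hfS, hgx x h1 h2])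
    apply edge_of_good hc hcon hoi hoj S hSP ?_ ?_ (fun T hT => hPr S T hSP hT)
    · rw [hfS, hgx i hij (Ne.symm hvi)]; omega
    · rw [hfS, hgj]
  · omega

/-- Failure of the BDI condition produces a consecutive pair of odd parts. -/
lemma bdi_extract (hcond : ¬ NoEdgeCondBDI P) : ∃ i j, Consec P i j ∧ Odd i ∧ Odd j := by
  rw [NoEdgeCondBDI] at hcond
  push_neg at hcond
  obtain ⟨h, h1, hlt, hno, hne⟩ := hcond
  have hev : Even (P.l h - P.l (h + 1)) := Nat.not_odd_iff_even.1 hno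
  have hodd_lh : Odd (P.l h) := Nat.not_even_iff_odd.1 (hne hev)
  have hodd_lh1 : Odd (P.l (h + 1)) := by
    rw [Nat.odd_iff] at hodd_lh ⊢; rw [Nat.even_iff] at hev; omega
  have hpos : 0 < P.l (h + 1) := by rw [Nat.odd_iff] at hodd_lh1; omega
  exact ⟨_, _, consec_of_h h1 hlt hpos, hodd_lh, hodd_lh1⟩

/-- Failure of the CI condition produces a consecutive pair of even parts, or an
even minimal part. -/
lemma ci_extract (hcond : ¬ NoEdgeCondCI P) :
    (∃ i j, Consec P i j ∧ Even i ∧ Even j) ∨ (∃ j, IsMinPart P j ∧ Even j) := by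
  rw [NoEdgeCondCI] at hcond
  push_neg at hcond
  obtain ⟨h, h1, hlt, hno, hne⟩ := hcond
  have hev : Even (P.l h - P.l (h + 1)) := Nat.not_odd_iff_even.1 hno
  have hev_lh : Even (P.l h) := Nat.not_odd_iff_even.1 (hne hev)
  have hev_lh1 : Even (P.l (h + 1)) := by
    rw [Nat.even_iff] at hev hev_lh ⊢; omega
  rcases Nat.eq_zero_or_pos (P.l (h + 1)) with hz | hpos
  · exact Or.inr ⟨P.l h, (minpart_of_h h1 hlt hz).1, hev_lh⟩
  · exact Or.inl ⟨_, _, consec_of_h h1 hlt hpos, hev_lh, hev_lh1⟩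

end Stmt14Aux
namespace Stmt14Aux

variable {P : PartitionData} {p q : ℕ}

lemma get_two {Pr : SYD P p q → Prop} (h2 : 2 ≤ Nat.card {T : SYD P p q // Pr T}) :
    ∃ A B : SYD P p q, Pr A ∧ Pr B ∧ A.f ≠ B.f := by
  obtain ⟨hne, hfin⟩ := Nat.card_pos_iff.1 (by omega : 0 < Nat.card {T : SYD P p q // Pr T})
  haveI := hfin
  haveI : Nontrivial {T : SYD P p q // Pr T} := Finite.one_lt_card_iff_nontrivial.1 h2
  obtain ⟨⟨A, hA⟩, ⟨B, hB⟩, hABne⟩ := exists_pair_ne {T : SYD P p q // Pr T}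
  exact ⟨A, B, hA, hB, fun h => hABne (Subtype.ext (syd_eq_of_f h))⟩

lemma parity_ne {x y : ℕ} (hox : Odd x) (hey : Even y) : x ≠ y := by
  rw [Nat.odd_iff] at hox; rw [Nat.even_iff] at hey; omega

lemma bdi_iff (h2 : 2 ≤ Nat.card {T : SYD P p q // T.IsBDI}) :
    orbitGraphX P p q 1 SYD.IsBDI = ⊥ ↔ NoEdgeCondBDI P := by
  constructor
  · intro hbot
    by_contra hcond
    obtain ⟨i, j, hcon, hoi, hoj⟩ := bdi_extract hcond
    obtain ⟨A, B, hA, hB, hABf⟩ := get_two h2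
    refine not_bot_odd one_pos A B hA hB hABf (fun T hT x hx => hT x hx)
      (fun T hT x hxo => ⟨one_dvd _, one_dvd _⟩) ?_ hcon hoi hoj hbot
    intro S T hS hch x hx
    rcases hch x with h | ⟨hox, _⟩
    · rw [h]; exact hS x hx
    · exact absurd hox (by rwa [Nat.not_odd_iff_even])
  · intro hcond
    exact eq_bot_of_no_adj fun T T' hT hT' => no_adj_odd one_pos T T' hT hT' hcond

lemma cii_iff (h2 : 2 ≤ Nat.card {T : SYD P p q // T.IsCII}) :
    orbitGraphX P p q 2 SYD.IsCII = ⊥ ↔ NoEdgeCondBDI P := by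
  constructor
  · intro hbot
    by_contra hcond
    obtain ⟨i, j, hcon, hoi, hoj⟩ := bdi_extract hcond
    obtain ⟨A, B, hA, hB, hABf⟩ := get_two h2
    refine not_bot_odd two_pos A B hA hB hABf (fun T hT x hx => hT.2.2.1 x hx) ?_ ?_
      hcon hoi hoj hbot
    · intro T hT x hxo
      obtain ⟨hm, hf⟩ := hT.2.2.2 x hxo
      rw [Nat.even_iff] at hm hf
      exact ⟨by omega, by omega⟩
    · intro S T hS hch
      refine ⟨hS.1, hS.2.1, ?_, ?_⟩
      · intro x hx
        rcases hch x with h | ⟨hox, _⟩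
        · rw [h]; exact hS.2.2.1 x hx
        · exact absurd hox (by rwa [Nat.not_odd_iff_even])
      · intro x hxo
        refine ⟨(hS.2.2.2 x hxo).1, ?_⟩
        have hSf : Even (S.f x) := (hS.2.2.2 x hxo).2
        rcases hch x with h | ⟨_, h | h⟩
        · rwa [h]
        · rw [h]; rw [Nat.even_iff] at hSf ⊢; omega
        · rw [Nat.even_iff] at hSf ⊢; omega
  · intro hcond
    exact eq_bot_of_no_adj fun T T' hT hT' =>
      no_adj_odd two_pos T T' hT.2.2.1 hT'.2.2.1 hcond

/-- Generic edge-existence for the even-part families (CI, DIII). -/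
lemma even_family_not_bot {c : ℕ} (hc : 0 < c) {Pr : SYD P p q → Prop}
    (T : SYD P p q) (hT : Pr T)
    (hTd : ∀ x, Even x → c ∣ T.f x)
    (hmd : ∀ x, x ∈ P.partsSet → Even x → c ∣ P.mult x)
    (hPr2 : ∀ S : SYD P p q, (∀ x, Odd x → S.f x = T.f x) → (∀ x, Even x → c ∣ S.f x) → Pr S)
    (hcond : ¬ NoEdgeCondCI P) :
    orbitGraphX P p q c Pr ≠ ⊥ := by
  rcases ci_extract hcond with ⟨i, j, hcon, hei, hej⟩ | ⟨j, hmin, hej⟩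
  · have hij : i ≠ j := (hcon.2.2.1).ne'
    have hnoi : ¬ Odd i := by rwa [Nat.not_odd_iff_even]
    have hnoj : ¬ Odd j := by rwa [Nat.not_odd_iff_even]
    have hmi : c ≤ P.mult i := Nat.le_of_dvd (mult_pos hcon.1) (hmd i hcon.1 hei)
    have hmj : c ≤ P.mult j := Nat.le_of_dvd (mult_pos hcon.2.1) (hmd j hcon.2.1 hej)
    set g := fun t => if t = i then 0 else if t = j then P.mult j else T.f t with hg
    have hgi : g i = 0 := by simp [hg]
    have hgj : g j = P.mult j := by simp [hg, Ne.symm hij]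
    have hgx : ∀ x, x ≠ i → x ≠ j → g x = T.f x := fun x h1 h2 => by simp [hg, h1, h2]
    have hle : ∀ x, g x ≤ P.mult x := by
      intro x
      by_cases h1 : x = i
      · rw [h1, hgi]; omega
      · by_cases h2 : x = j
        · rw [h2, hgj]
        · rw [hgx x h1 h2]; exact T.le_mult x
    have hsum : osum P g = osum P T.f := by
      apply osum_upd2 T.f _ _ hcon.1 hcon.2.1 hij
      rw [if_neg hnoi, if_neg hnoj, if_neg hnoi, if_neg hnoj]
    set S := mkSYD T g hle hsum with hSdef
    have hfS : ∀ x, S.f x = g x := fun x => rfl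
    have hSodd : ∀ x, Odd x → S.f x = T.f x := by
      intro x hox
      rw [hfS, hgx x (parity_ne hox hei) (parity_ne hox hej)]
    have hSdvd : ∀ x, Even x → c ∣ S.f x := by
      intro x hex
      by_cases h1 : x = i
      · rw [h1, hfS, hgi]; exact dvd_zero c
      · by_cases h2 : x = j
        · rw [h2, hfS, hgj]; exact hmd j hcon.2.1 hej
        · rw [hfS, hgx x h1 h2]; exact hTd x hex
    have hSP : Pr S := hPr2 S hSodd hSdvd
    apply edge_of_goodE hc hcon hei hej S hSP ?_ ?_ ?_
    · rw [hfS, hgi]; omega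
    · rw [hfS, hgj]; exact hmj
    · intro T' hch
      apply hPr2 T'
      · intro x hox
        rcases hch x with h | ⟨hex, _⟩
        · rw [h]; exact hSodd x hox
        · exact absurd hox (by rwa [Nat.not_odd_iff_even])
      · intro x hex
        rcases hch x with h | ⟨_, h | h⟩
        · rw [h]; exact hSdvd x hex
        · rw [h]; exact dvd_add (hSdvd x hex) dvd_rfl
        · have h' : T'.f x = S.f x - c := by omega
          rw [h']; exact Nat.dvd_sub (hSdvd x hex) dvd_rfl
  · have hmj : c ≤ P.mult j := Nat.le_of_dvd (mult_pos hmin.1) (hmd j hmin.1 hej)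
    apply edge_of_min hc hmin hej T hT hmj
    intro T' houts hval
    apply hPr2 T'
    · intro x hox
      exact houts x (parity_ne hox hej)
    · intro x hex
      by_cases h1 : x = j
      · subst h1
        rcases hval with h | h <;> simp [h]
      · rw [houts x h1]; exact hTd x hex

lemma ci_iff (h2 : 2 ≤ Nat.card {T : SYD P p q // T.IsCI}) :
    orbitGraphX P p q 1 SYD.IsCI = ⊥ ↔ NoEdgeCondCI P := by
  constructor
  · intro hbot
    by_contra hcond
    obtain ⟨A, B, hA, hB, hABf⟩ := get_two h2
    exact even_family_not_bot one_pos A hA (fun x hx => one_dvd _) (fun x hxp hx => one_dvd _)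
      (fun S hSodd hSdvd => ⟨hA.1, fun x hox => by rw [hSodd x hox]; exact hA.2 x hox⟩)
      hcond hbot
  · intro hcond
    exact eq_bot_of_no_adj fun T T' hT hT' => no_adj_even one_pos T T' hT.2 hT'.2 hcond

lemma diii_iff (h2 : 2 ≤ Nat.card {T : SYD P p q // T.IsDIII}) :
    orbitGraphX P p q 2 SYD.IsDIII = ⊥ ↔ NoEdgeCondCI P := by
  constructor
  · intro hbot
    by_contra hcond
    obtain ⟨A, B, hA, hB, hABf⟩ := get_two h2
    refine even_family_not_bot two_pos A hA ?_ ?_ ?_ hcond hbot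
    · intro x hx
      have := (hA.2.2 x hx).2
      rw [Nat.even_iff] at this; omega
    · intro x hxp hx
      have := (hA.2.2 x hx).1
      rw [Nat.even_iff] at this; omega
    · intro S hSodd hSdvd
      refine ⟨hA.1, fun x hox => by rw [hSodd x hox]; exact hA.2.1 x hox, ?_⟩
      intro x hex
      refine ⟨(hA.2.2 x hex).1, ?_⟩
      have := hSdvd x hex
      rw [Nat.even_iff]; omega
  · intro hcond
    exact eq_bot_of_no_adj fun T T' hT hT' => no_adj_even two_pos T T' hT.2.1 hT'.2.1 hcond

end Stmt14Aux


/-- Assuming `#syd_X(λ;p,q) ≥ 2`, the orbit graph `Γ_X(λ;p,q)` has no edges iff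
the column-multiplicity condition of the corresponding type holds.  In
particular, if `λ` has distinct column lengths, `Γ_X(λ;p,q)` has no edges. -/
theorem stmt14 (P : PartitionData) (p q : ℕ) (hn : P.boxSum = p + q) :
    (2 ≤ Nat.card {T : SYD P p q // T.IsBDI} →
      (orbitGraphX P p q 1 SYD.IsBDI = ⊥ ↔ NoEdgeCondBDI P)) ∧
    (2 ≤ Nat.card {T : SYD P p q // T.IsCII} →
      (orbitGraphX P p q 2 SYD.IsCII = ⊥ ↔ NoEdgeCondBDI P)) ∧
    (2 ≤ Nat.card {T : SYD P p q // T.IsCI} →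
      (orbitGraphX P p q 1 SYD.IsCI = ⊥ ↔ NoEdgeCondCI P)) ∧
    (2 ≤ Nat.card {T : SYD P p q // T.IsDIII} →
      (orbitGraphX P p q 2 SYD.IsDIII = ⊥ ↔ NoEdgeCondCI P)) ∧
    ((∀ j, 1 ≤ j → P.l j - P.l (j + 1) ≤ 1) →
      orbitGraphX P p q 1 SYD.IsBDI = ⊥ ∧ orbitGraphX P p q 2 SYD.IsCII = ⊥ ∧
        orbitGraphX P p q 1 SYD.IsCI = ⊥ ∧ orbitGraphX P p q 2 SYD.IsDIII = ⊥) := by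
  refine ⟨Stmt14Aux.bdi_iff, Stmt14Aux.cii_iff, Stmt14Aux.ci_iff, Stmt14Aux.diii_iff, ?_⟩
  intro hdist
  have hodd : ∀ h, 1 ≤ h → P.l (h + 1) < P.l h → Odd (P.l h - P.l (h + 1)) := by
    intro h h1 hlt
    have := hdist h h1
    have he : P.l h - P.l (h + 1) = 1 := by omega
    rw [he]; exact odd_one
  have hBDI : NoEdgeCondBDI P := fun h h1 hlt => Or.inl (hodd h h1 hlt)
  have hCI : NoEdgeCondCI P := fun h h1 hlt => Or.inl (hodd h h1 hlt)
  refine ⟨?_, ?_, ?_, ?_⟩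
  · exact Stmt14Aux.eq_bot_of_no_adj fun T T' hT hT' =>
      Stmt14Aux.no_adj_odd one_pos T T' hT hT' hBDI
  · exact Stmt14Aux.eq_bot_of_no_adj fun T T' hT hT' =>
      Stmt14Aux.no_adj_odd two_pos T T' hT.2.2.1 hT'.2.2.1 hBDI
  · exact Stmt14Aux.eq_bot_of_no_adj fun T T' hT hT' =>
      Stmt14Aux.no_adj_even one_pos T T' hT.2 hT'.2 hCI
  · exact Stmt14Aux.eq_bot_of_no_adj fun T T' hT hT' =>
      Stmt14Aux.no_adj_even two_pos T T' hT.2.1 hT'.2.1 hCI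
end

section
/- Let λ be a partition of n = p + q in which every even part occurs with even multiplicity, and assume λ has distinct column lengths; let 0 = k_0 < k_1 < ⋯ < k_m be the column lengths of λ listed increasingly and set d = (p − q + #(odd parts of λ))/2. Then the number of connected components of Γ_BDI(λ;p,q) equals #syd_BDI(λ;p,q) (the graph has no edges) and equals the coefficient of t^d in ∏_{1 ≤ s ≤ m, λ_{k_s} odd} (1 + t + ⋯ + t^{k_s − k_{s−1}}), the coefficient being taken to be 0 if d is not a nonnegative integer. -/
open Finset

/-- The set of column lengths of `λ`: those `h ≥ 1` with `λ_h - λ_{h+1} > 0`. -/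
def colSet (P : PartitionData) : Finset ℕ :=
  (Finset.Icc 1 P.len).filter (fun h => P.l (h + 1) < P.l h)

section AuxBasic
variable (P : PartitionData)

lemma l_anti : ∀ a b : ℕ, 1 ≤ a → a ≤ b → P.l b ≤ P.l a := by
  intro a b ha hab
  induction b with
  | zero => omega
  | succ n ih =>
    rcases Nat.lt_or_ge a (n+1) with h | h
    · have h1 : a ≤ n := by omega
      have h2 : 1 ≤ n := by omega
      exact le_trans (P.anti n h2) (ih h1)
    · have : a = n + 1 := by omega
      subst this; rfl

lemma mem_partsSet_iff {i : ℕ} :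
    i ∈ P.partsSet ↔ ∃ j, 1 ≤ j ∧ j ≤ P.len ∧ P.l j = i := by
  simp [PartitionData.partsSet, Finset.mem_image, Finset.mem_Icc, and_assoc]

lemma l_pos_of_le {j : ℕ} (h1 : 1 ≤ j) (h2 : j ≤ P.len) : 1 ≤ P.l j :=
  (P.pos j h1).2 h2

lemma l_eq_zero {j : ℕ} (h1 : 1 ≤ j) (h2 : P.len < j) : P.l j = 0 := by
  have := P.pos j h1; omega

lemma mult_eq_zero_of_not_mem {i : ℕ} (h : i ∉ P.partsSet) : P.mult i = 0 := by
  rw [PartitionData.mult, Finset.card_eq_zero, Finset.filter_eq_empty_iff]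
  intro j hj hji
  exact h ((mem_partsSet_iff P).2 ⟨j, (Finset.mem_Icc.1 hj).1, (Finset.mem_Icc.1 hj).2, hji⟩)

lemma exists_part_between (hdist : ∀ j, 1 ≤ j → P.l j - P.l (j + 1) ≤ 1) :
    ∀ d a v : ℕ, 1 ≤ a → P.l (a + d) ≤ v → v ≤ P.l a →
      ∃ c, a ≤ c ∧ c ≤ a + d ∧ P.l c = v := by
  intro d
  induction d with
  | zero => intro a v ha h1 h2; simp only [Nat.add_zero] at h1; exact ⟨a, le_refl a, by omega, by omega⟩
  | succ n ih =>
    intro a v ha h1 h2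
    rcases Nat.lt_or_ge (P.l (a+1)) v with h | h
    · have := hdist a ha
      exact ⟨a, le_refl a, by omega, by omega⟩
    · have h1' : P.l (a + 1 + n) ≤ v := by
        have : a + 1 + n = a + (n+1) := by omega
        rwa [this]
      obtain ⟨c, hc1, hc2, hc3⟩ := ih (a+1) v (by omega) h1' h
      exact ⟨c, by omega, by omega, hc3⟩
end AuxBasic

section Aux2
variable (P : PartitionData)

lemma SYD.ext' {p q : ℕ} {T T' : SYD P p q} (h : T.f = T'.f) : T = T' := by
  cases T; cases T'; simp only at h; subst h; rfl

lemma consec_succ (hdist : ∀ j, 1 ≤ j → P.l j - P.l (j + 1) ≤ 1) {i j : ℕ}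
    (h : Consec P i j) : i = j + 1 := by
  obtain ⟨hi, hj, hji, hno⟩ := h
  obtain ⟨a, ha1, ha2, ha3⟩ := (mem_partsSet_iff P).1 hi
  obtain ⟨b, hb1, hb2, hb3⟩ := (mem_partsSet_iff P).1 hj
  have hab : a ≤ b := by
    by_contra hcon
    have := l_anti P b a hb1 (by omega)
    omega
  have hmem : ∃ c, a ≤ c ∧ c ≤ b ∧ P.l c = i - 1 := by
    have := exists_part_between P hdist (b - a) a (i - 1) ha1
      (by rw [show a + (b - a) = b by omega]; omega) (by omega)
    obtain ⟨c, hc1, hc2, hc3⟩ := this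
    exact ⟨c, hc1, by omega, hc3⟩
  obtain ⟨c, hc1, hc2, hc3⟩ := hmem
  have hmem2 : (i - 1) ∈ P.partsSet :=
    (mem_partsSet_iff P).2 ⟨c, by omega, by omega, hc3⟩
  have := hno (i - 1) hmem2
  omega

lemma odd_term_plus {i f mlt : ℕ} (hodd : Odd i) (hle : f ≤ mlt) :
    f * ((i + 1) / 2) + (mlt - f) * (i / 2) = mlt * (i / 2) + f := by
  obtain ⟨t, rfl⟩ := hodd
  have h1 : (2 * t + 1 + 1) / 2 = t + 1 := by omega
  have h2 : (2 * t + 1) / 2 = t := by omega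
  rw [h1, h2, Nat.mul_add, Nat.mul_one, Nat.sub_mul]
  have := Nat.mul_le_mul_right t hle
  omega

lemma odd_term_minus {i f mlt : ℕ} (hodd : Odd i) (hle : f ≤ mlt) :
    f * (i / 2) + (mlt - f) * ((i + 1) / 2) = mlt * (i / 2) + (mlt - f) := by
  obtain ⟨t, rfl⟩ := hodd
  have h1 : (2 * t + 1 + 1) / 2 = t + 1 := by omega
  have h2 : (2 * t + 1) / 2 = t := by omega
  rw [h1, h2, Nat.mul_add, Nat.mul_one, Nat.sub_mul]
  have := Nat.mul_le_mul_right t hle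
  omega

lemma even_term_plus {i f mlt : ℕ} (heven : Even i) (hle : f ≤ mlt) :
    f * ((i + 1) / 2) + (mlt - f) * (i / 2) = mlt * (i / 2) := by
  obtain ⟨t, rfl⟩ := heven
  have h1 : (t + t + 1) / 2 = t := by omega
  have h2 : (t + t) / 2 = t := by omega
  rw [h1, h2, Nat.sub_mul]
  have := Nat.mul_le_mul_right t hle
  omega

lemma even_term_minus {i f mlt : ℕ} (heven : Even i) (hle : f ≤ mlt) :
    f * (i / 2) + (mlt - f) * ((i + 1) / 2) = mlt * (i / 2) := by
  obtain ⟨t, rfl⟩ := heven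
  have h1 : (t + t + 1) / 2 = t := by omega
  have h2 : (t + t) / 2 = t := by omega
  rw [h1, h2, Nat.sub_mul]
  have := Nat.mul_le_mul_right t hle
  omega

/-- plus sum formula -/
lemma plus_sum {p q : ℕ} (T : SYD P p q) :
    ∑ i ∈ P.partsSet, (T.f i * ((i + 1) / 2) + (P.mult i - T.f i) * (i / 2)) =
    (∑ i ∈ P.partsSet, P.mult i * (i / 2)) +
      ∑ i ∈ P.partsSet.filter (fun i => Odd i), T.f i := by
  rw [Finset.sum_filter, ← Finset.sum_add_distrib]
  apply Finset.sum_congr rfl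
  intro i _
  rcases Nat.even_or_odd i with he | ho
  · rw [even_term_plus he (T.le_mult i), if_neg (by simp [Nat.not_odd_iff_even.2 he]), Nat.add_zero]
  · rw [odd_term_plus ho (T.le_mult i), if_pos ho]

lemma minus_sum {p q : ℕ} (T : SYD P p q) :
    ∑ i ∈ P.partsSet, (T.f i * (i / 2) + (P.mult i - T.f i) * ((i + 1) / 2)) =
    (∑ i ∈ P.partsSet, P.mult i * (i / 2)) +
      ∑ i ∈ P.partsSet.filter (fun i => Odd i), (P.mult i - T.f i) := by
  rw [Finset.sum_filter, ← Finset.sum_add_distrib]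
  apply Finset.sum_congr rfl
  intro i _
  rcases Nat.even_or_odd i with he | ho
  · rw [even_term_minus he (T.le_mult i), if_neg (by simp [Nat.not_odd_iff_even.2 he]), Nat.add_zero]
  · rw [odd_term_minus ho (T.le_mult i), if_pos ho]

end Aux2

section Aux3
variable (P : PartitionData)

lemma no_edge {p q : ℕ} (hmult : ∀ i, Even i → Even (P.mult i))
    (hdist : ∀ j, 1 ≤ j → P.l j - P.l (j + 1) ≤ 1)
    {T T' : SYD P p q} (hT : T.IsBDI) (hT' : T'.IsBDI)
    (hadj : AdjRel P 1 T T') : T = T' := by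
  have evenfix : ∀ i, Even i → T.f i = T'.f i := by
    intro i hi
    have h1 := hT i hi
    have h2 := hT' i hi
    omega
  rcases hadj with ⟨i, j, hc, hoth, hch⟩ | ⟨j, hmin, hoth, hch⟩
  · have hij : i = j + 1 := consec_succ P hdist hc
    rcases Nat.even_or_odd j with he | ho
    · have := evenfix j he
      omega
    · have : Even i := by rw [hij]; exact Odd.add_one ho
      have := evenfix i this
      omega
  · rcases Nat.even_or_odd j with he | ho
    · have := evenfix j he
      omega
    · -- use plus sums
      exfalso
      have hjm : j ∈ P.partsSet := hmin.1
      have e1 : ∀ (U : SYD P p q), ∑ i ∈ P.partsSet,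
          (U.f i * ((i + 1) / 2) + (P.mult i - U.f i) * (i / 2)) =
          (U.f j * ((j + 1) / 2) + (P.mult j - U.f j) * (j / 2)) +
          ∑ i ∈ P.partsSet.erase j,
            (U.f i * ((i + 1) / 2) + (P.mult i - U.f i) * (i / 2)) := by
        intro U
        exact (Finset.add_sum_erase _ _ hjm).symm
      have h1 := e1 T
      have h2 := e1 T'
      rw [T.plus_eq] at h1
      rw [T'.plus_eq] at h2
      have herase : ∑ i ∈ P.partsSet.erase j,
            (T.f i * ((i + 1) / 2) + (P.mult i - T.f i) * (i / 2)) =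
          ∑ i ∈ P.partsSet.erase j,
            (T'.f i * ((i + 1) / 2) + (P.mult i - T'.f i) * (i / 2)) := by
        apply Finset.sum_congr rfl
        intro x hx
        rw [hoth x (Finset.ne_of_mem_erase hx)]
      rw [herase] at h1
      have hterm : T.f j * ((j + 1) / 2) + (P.mult j - T.f j) * (j / 2) =
          T'.f j * ((j + 1) / 2) + (P.mult j - T'.f j) * (j / 2) := by omega
      rw [odd_term_plus ho (T.le_mult j), odd_term_plus ho (T'.le_mult j)] at hterm
      omega

lemma graph_bot {p q : ℕ} (hmult : ∀ i, Even i → Even (P.mult i))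
    (hdist : ∀ j, 1 ≤ j → P.l j - P.l (j + 1) ≤ 1) :
    orbitGraphX P p q 1 SYD.IsBDI = ⊥ := by
  ext T T'
  simp only [orbitGraphX, SimpleGraph.fromRel_adj, SimpleGraph.bot_adj, iff_false, not_and]
  intro hne h
  rcases h with h | h
  · exact hne (Subtype.ext (no_edge P hmult hdist T.2 T'.2 h))
  · exact hne (Subtype.ext (no_edge P hmult hdist T'.2 T.2 h).symm)

lemma comp_card {V : Type*} {G : SimpleGraph V} (h : G = ⊥) :
    Nat.card G.ConnectedComponent = Nat.card V := by
  subst h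
  apply Nat.card_congr
  exact (Equiv.ofBijective (⊥ : SimpleGraph V).connectedComponentMk
    ⟨fun a b hab => SimpleGraph.reachable_bot.1
      (SimpleGraph.ConnectedComponent.exact hab),
     SimpleGraph.ConnectedComponent.ind (fun v => ⟨v, rfl⟩)⟩).symm

end Aux3

section Aux4
variable (P : PartitionData) (m : ℕ) (k : ℕ → ℕ)
variable (hk0 : k 0 = 0) (hkmono : StrictMonoOn k (Set.Icc 0 m))
variable (hkim : (Finset.Icc 1 m).image k = colSet P)

lemma mem_colSet_iff {h : ℕ} :
    h ∈ colSet P ↔ 1 ≤ h ∧ h ≤ P.len ∧ P.l (h + 1) < P.l h := by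
  simp [colSet, Finset.mem_filter, Finset.mem_Icc, and_assoc]

include hkim in
lemma k_mem_colSet {s : ℕ} (h1 : 1 ≤ s) (h2 : s ≤ m) : k s ∈ colSet P := by
  rw [← hkim]
  exact Finset.mem_image_of_mem k (Finset.mem_Icc.2 ⟨h1, h2⟩)

include hkim in
lemma colSet_mem_k {h : ℕ} (hh : h ∈ colSet P) :
    ∃ s, 1 ≤ s ∧ s ≤ m ∧ k s = h := by
  rw [← hkim] at hh
  obtain ⟨s, hs, rfl⟩ := Finset.mem_image.1 hh
  exact ⟨s, (Finset.mem_Icc.1 hs).1, (Finset.mem_Icc.1 hs).2, rfl⟩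

include hkmono in
lemma k_lt_k {s t : ℕ} (h1 : s ≤ m) (h2 : t ≤ m) (h : s < t) : k s < k t :=
  hkmono ⟨Nat.zero_le s, h1⟩ ⟨Nat.zero_le t, h2⟩ h

include hkmono hkim in
lemma no_col_between {s : ℕ} (h1 : 1 ≤ s) (h2 : s ≤ m) {h : ℕ}
    (hh : h ∈ colSet P) : ¬(k (s - 1) < h ∧ h < k s) := by
  rintro ⟨hl, hr⟩
  obtain ⟨t, ht1, ht2, rfl⟩ := colSet_mem_k P m k hkim hh
  have e1 : s - 1 < t := by
    have := (hkmono.lt_iff_lt (a := s-1) (b := t) ⟨Nat.zero_le _, by omega⟩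
      ⟨Nat.zero_le _, by omega⟩).1 hl
    exact this
  have e2 : t < s := by
    have := (hkmono.lt_iff_lt (a := t) (b := s) ⟨Nat.zero_le _, by omega⟩
      ⟨Nat.zero_le _, by omega⟩).1 hr
    exact this
  omega

include hkmono hkim in
lemma const_block {s : ℕ} (h1 : 1 ≤ s) (h2 : s ≤ m) :
    ∀ d j, k s - j = d → k (s - 1) < j → j ≤ k s → P.l j = P.l (k s) := by
  intro d
  induction d with
  | zero => intro j hd _ hj2; have : j = k s := by omega
            rw [this]
  | succ n ih =>
    intro j hd hj1 hj2
    have hjlt : j < k s := by omega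
    have hks : k s ∈ colSet P := k_mem_colSet P m k hkim h1 h2
    have hkslen : k s ≤ P.len := ((mem_colSet_iff P).1 hks).2.1
    have hjcol : j ∉ colSet P := fun hc => no_col_between P m k hkmono hkim h1 h2 hc ⟨hj1, hjlt⟩
    have hj1' : 1 ≤ j := by omega
    have : ¬ P.l (j + 1) < P.l j := by
      intro hc
      exact hjcol ((mem_colSet_iff P).2 ⟨hj1', by omega, hc⟩)
    have heq : P.l (j + 1) = P.l j := by
      have := P.anti j hj1'
      omega
    rw [← heq]
    exact ih (j + 1) (by omega) (by omega) (by omega)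

include hk0 hkmono hkim in
lemma mem_range_k : ∀ d j, P.len - j = d → 1 ≤ j → j ≤ P.len →
    ∃ s, 1 ≤ s ∧ s ≤ m ∧ k (s - 1) < j ∧ j ≤ k s := by
  intro d
  induction d with
  | zero =>
    intro j hd hj1 hj2
    have hjlen : j = P.len := by omega
    have hcol : j ∈ colSet P := by
      rw [mem_colSet_iff]
      refine ⟨hj1, hj2, ?_⟩
      have h0 : P.l (j + 1) = 0 := l_eq_zero P (by omega) (by omega)
      have h1 : 1 ≤ P.l j := l_pos_of_le P hj1 hj2
      omega
    obtain ⟨s, hs1, hs2, rfl⟩ := colSet_mem_k P m k hkim hcol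
    exact ⟨s, hs1, hs2, k_lt_k m k hkmono (by omega) hs2 (by omega), le_refl _⟩
  | succ n ih =>
    intro j hd hj1 hj2
    by_cases hcol : j ∈ colSet P
    · obtain ⟨s, hs1, hs2, rfl⟩ := colSet_mem_k P m k hkim hcol
      exact ⟨s, hs1, hs2, k_lt_k m k hkmono (by omega) hs2 (by omega), le_refl _⟩
    · have hjlen : j < P.len := by
        rcases Nat.lt_or_ge j P.len with h | h
        · exact h
        · exfalso
          apply hcol
          rw [mem_colSet_iff]
          refine ⟨hj1, by omega, ?_⟩
          have h0 : P.l (j + 1) = 0 := l_eq_zero P (by omega) (by omega)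
          have h1 : 1 ≤ P.l j := l_pos_of_le P hj1 (by omega)
          omega
      obtain ⟨s, hs1, hs2, hs3, hs4⟩ := ih (j + 1) (by omega) (by omega) (by omega)
      refine ⟨s, hs1, hs2, ?_, by omega⟩
      rcases Nat.lt_or_ge (k (s - 1)) j with h | h
      · exact h
      · exfalso
        have hkj : k (s - 1) = j := by omega
        have hs1' : 1 ≤ s - 1 := by
          by_contra hc
          have h0 : s - 1 = 0 := by omega
          rw [h0, hk0] at hkj
          omega
        have hmem : k (s - 1) ∈ colSet P := k_mem_colSet P m k hkim hs1' (by omega)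
        rw [hkj] at hmem
        exact hcol hmem

include hkmono hkim in
lemma lk_strict_anti {s t : ℕ} (hs1 : 1 ≤ s) (ht : t ≤ m) (hst : s < t) :
    P.l (k t) < P.l (k s) := by
  have hks : k s ∈ colSet P := k_mem_colSet P m k hkim hs1 (by omega)
  have h1 : P.l (k s + 1) < P.l (k s) := ((mem_colSet_iff P).1 hks).2.2
  have h2 : k s < k t := k_lt_k m k hkmono (by omega) ht hst
  have h3 : P.l (k t) ≤ P.l (k s + 1) := l_anti P (k s + 1) (k t) (by omega) (by omega)
  omega

include hkmono hkim in
lemma lk_inj {s t : ℕ} (hs1 : 1 ≤ s) (hs2 : s ≤ m) (ht1 : 1 ≤ t) (ht2 : t ≤ m)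
    (h : P.l (k s) = P.l (k t)) : s = t := by
  rcases Nat.lt_trichotomy s t with hlt | heq | hgt
  · have := lk_strict_anti P m k hkmono hkim hs1 ht2 hlt; omega
  · exact heq
  · have := lk_strict_anti P m k hkmono hkim ht1 hs2 hgt; omega

include hk0 hkmono hkim in
lemma mult_eq_k {s : ℕ} (h1 : 1 ≤ s) (h2 : s ≤ m) :
    P.mult (P.l (k s)) = k s - k (s - 1) := by
  have hfib : (Finset.Icc 1 P.len).filter (fun j => P.l j = P.l (k s)) =
      Finset.Ioc (k (s - 1)) (k s) := by
    ext j
    simp only [Finset.mem_filter, Finset.mem_Icc, Finset.mem_Ioc]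
    constructor
    · rintro ⟨⟨hj1, hj2⟩, hje⟩
      obtain ⟨s', hs'1, hs'2, hs'3, hs'4⟩ :=
        mem_range_k P m k hk0 hkmono hkim (P.len - j) j rfl hj1 hj2
      have : P.l j = P.l (k s') :=
        const_block P m k hkmono hkim hs'1 hs'2 (k s' - j) j rfl hs'3 hs'4
      have hss : s' = s := lk_inj P m k hkmono hkim hs'1 hs'2 h1 h2 (by omega)
      subst hss
      exact ⟨hs'3, hs'4⟩
    · rintro ⟨hj1, hj2⟩
      have hks : k s ∈ colSet P := k_mem_colSet P m k hkim h1 h2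
      have hkslen : k s ≤ P.len := ((mem_colSet_iff P).1 hks).2.1
      exact ⟨⟨by omega, by omega⟩,
        const_block P m k hkmono hkim h1 h2 (k s - j) j rfl hj1 hj2⟩
  rw [PartitionData.mult, hfib, Nat.card_Ioc]

include hk0 hkmono hkim in
lemma parts_surj {i : ℕ} (hi : i ∈ P.partsSet) :
    ∃ s, 1 ≤ s ∧ s ≤ m ∧ P.l (k s) = i := by
  obtain ⟨j, hj1, hj2, rfl⟩ := (mem_partsSet_iff P).1 hi
  obtain ⟨s, hs1, hs2, hs3, hs4⟩ :=
    mem_range_k P m k hk0 hkmono hkim (P.len - j) j rfl hj1 hj2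
  exact ⟨s, hs1, hs2,
    (const_block P m k hkmono hkim hs1 hs2 (k s - j) j rfl hs3 hs4).symm⟩

include hkim in
lemma lk_mem_parts {s : ℕ} (h1 : 1 ≤ s) (h2 : s ≤ m) : P.l (k s) ∈ P.partsSet := by
  have hks : k s ∈ colSet P := k_mem_colSet P m k hkim h1 h2
  rw [mem_colSet_iff] at hks
  exact (mem_partsSet_iff P).2 ⟨k s, hks.1, hks.2.1, rfl⟩

end Aux4

section Aux5
variable (P : PartitionData)

lemma maps_to_parts : ∀ j ∈ Finset.Icc 1 P.len, P.l j ∈ P.partsSet :=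
  fun j hj => Finset.mem_image_of_mem _ hj

lemma oddCount_eq :
    P.oddCount = ∑ i ∈ P.partsSet.filter (fun i => Odd i), P.mult i := by
  have key := Finset.sum_fiberwise_of_maps_to (t := P.partsSet) (maps_to_parts P)
    (fun j => if Odd (P.l j) then 1 else 0)
  rw [PartitionData.oddCount, Finset.card_filter, ← key, Finset.sum_filter]
  apply Finset.sum_congr rfl
  intro i _
  have inner : ∑ j ∈ (Finset.Icc 1 P.len).filter (fun j => P.l j = i),
      (if Odd (P.l j) then 1 else 0) =
      ∑ j ∈ (Finset.Icc 1 P.len).filter (fun j => P.l j = i),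
      (if Odd i then 1 else 0) := by
    apply Finset.sum_congr rfl
    intro j hj
    rw [(Finset.mem_filter.1 hj).2]
  rw [inner, Finset.sum_const, smul_eq_mul]
  by_cases ho : Odd i
  · rw [if_pos ho, if_pos ho, mul_one]; rfl
  · rw [if_neg ho, if_neg ho, mul_zero]

lemma boxSum_eq : P.boxSum = ∑ i ∈ P.partsSet, P.mult i * i := by
  have key := Finset.sum_fiberwise_of_maps_to (t := P.partsSet) (maps_to_parts P)
    (fun j => P.l j)
  rw [PartitionData.boxSum, ← key]
  apply Finset.sum_congr rfl
  intro i _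
  have inner : ∑ j ∈ (Finset.Icc 1 P.len).filter (fun j => P.l j = i),
      P.l j = ∑ j ∈ (Finset.Icc 1 P.len).filter (fun j => P.l j = i), i := by
    apply Finset.sum_congr rfl
    intro j hj
    exact (Finset.mem_filter.1 hj).2
  rw [inner, Finset.sum_const, smul_eq_mul]
  rfl

lemma boxSum_split :
    ∑ i ∈ P.partsSet, P.mult i * i =
      2 * (∑ i ∈ P.partsSet, P.mult i * (i / 2)) +
        ∑ i ∈ P.partsSet.filter (fun i => Odd i), P.mult i := by
  rw [Finset.sum_filter, Finset.mul_sum, ← Finset.sum_add_distrib]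
  apply Finset.sum_congr rfl
  intro i _
  rcases Nat.even_or_odd i with he | ho
  · obtain ⟨t, rfl⟩ := he
    have h2 : (t + t) / 2 = t := by omega
    rw [h2, if_neg (by simp [Nat.not_odd_iff_even.2 ⟨t, rfl⟩]), Nat.add_zero]
    ring
  · obtain ⟨t, rfl⟩ := ho
    have h2 : (2 * t + 1) / 2 = t := by omega
    rw [h2, if_pos ⟨t, rfl⟩]
    ring

end Aux5

section Aux6
variable (P : PartitionData)

lemma plus_sum' (f : ℕ → ℕ) (hle : ∀ i, f i ≤ P.mult i) :
    ∑ i ∈ P.partsSet, (f i * ((i + 1) / 2) + (P.mult i - f i) * (i / 2)) =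
    (∑ i ∈ P.partsSet, P.mult i * (i / 2)) +
      ∑ i ∈ P.partsSet.filter (fun i => Odd i), f i := by
  rw [Finset.sum_filter, ← Finset.sum_add_distrib]
  apply Finset.sum_congr rfl
  intro i _
  rcases Nat.even_or_odd i with he | ho
  · rw [even_term_plus he (hle i), if_neg (by simp [Nat.not_odd_iff_even.2 he]), Nat.add_zero]
  · rw [odd_term_plus ho (hle i), if_pos ho]

lemma minus_sum' (f : ℕ → ℕ) (hle : ∀ i, f i ≤ P.mult i) :
    ∑ i ∈ P.partsSet, (f i * (i / 2) + (P.mult i - f i) * ((i + 1) / 2)) =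
    (∑ i ∈ P.partsSet, P.mult i * (i / 2)) +
      ∑ i ∈ P.partsSet.filter (fun i => Odd i), (P.mult i - f i) := by
  rw [Finset.sum_filter, ← Finset.sum_add_distrib]
  apply Finset.sum_congr rfl
  intro i _
  rcases Nat.even_or_odd i with he | ho
  · rw [even_term_minus he (hle i), if_neg (by simp [Nat.not_odd_iff_even.2 he]), Nat.add_zero]
  · rw [odd_term_minus ho (hle i), if_pos ho]

lemma sum_odd_split (f : ℕ → ℕ) (hle : ∀ i, f i ≤ P.mult i) :
    (∑ i ∈ P.partsSet.filter (fun i => Odd i), f i) +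
      ∑ i ∈ P.partsSet.filter (fun i => Odd i), (P.mult i - f i) =
    ∑ i ∈ P.partsSet.filter (fun i => Odd i), P.mult i := by
  rw [← Finset.sum_add_distrib]
  exact Finset.sum_congr rfl (fun i _ => by have := hle i; omega)

/-- For any signed Young diagram, `2 D + q = p + O`. -/
lemma exists_D {p q : ℕ} (hn : P.boxSum = p + q) (T : SYD P p q) :
    2 * (∑ i ∈ P.partsSet.filter (fun i => Odd i), T.f i) + q =
      p + ∑ i ∈ P.partsSet.filter (fun i => Odd i), P.mult i := by
  have h1 := T.plus_eq
  rw [plus_sum' P T.f T.le_mult] at h1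
  have h2 := T.minus_eq
  rw [minus_sum' P T.f T.le_mult] at h2
  have h3 := sum_odd_split P T.f T.le_mult
  have h4 : P.boxSum = 2 * (∑ i ∈ P.partsSet, P.mult i * (i / 2)) +
      ∑ i ∈ P.partsSet.filter (fun i => Odd i), P.mult i := by
    rw [boxSum_eq, boxSum_split]
  omega

lemma card_BDI {p q : ℕ} (hn : P.boxSum = p + q)
    (hmult : ∀ i, Even i → Even (P.mult i)) (dnat : ℕ)
    (hB : 2 * dnat + q = p + ∑ i ∈ P.partsSet.filter (fun i => Odd i), P.mult i) :
    Nat.card {T : SYD P p q // T.IsBDI} =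
    (((P.partsSet.filter (fun i => Odd i)).pi
        (fun i => Finset.range (P.mult i + 1))).filter
      (fun g => ∑ x ∈ (P.partsSet.filter (fun i => Odd i)).attach, g x.1 x.2 = dnat)).card := by
  classical
  set odds := P.partsSet.filter (fun i => Odd i) with hodds
  have hA : 2 * (∑ i ∈ P.partsSet, P.mult i * (i / 2)) +
      ∑ i ∈ odds, P.mult i = p + q := by
    rw [← boxSum_split, ← boxSum_eq, hn]
  set F := (odds.pi (fun i => Finset.range (P.mult i + 1))).filter
      (fun g => ∑ x ∈ odds.attach, g x.1 x.2 = dnat) with hF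
  have e : {T : SYD P p q // T.IsBDI} ≃ {g // g ∈ F} := by
    refine
      { toFun := fun T => ⟨fun i _ => T.1.f i, ?_⟩
        invFun := fun g =>
          ⟨⟨fun i => if h : i ∈ odds then g.1 i h else P.mult i / 2, ?_, ?_, ?_⟩, ?_⟩
        left_inv := ?_
        right_inv := ?_ }
    · -- membership of toFun
      rw [hF, Finset.mem_filter]
      constructor
      · exact Finset.mem_pi.2 fun i hi => Finset.mem_range.2 (Nat.lt_succ_of_le (T.1.le_mult i))
      · have hs : ∑ x ∈ odds.attach, T.1.f x.1 = ∑ i ∈ odds, T.1.f i :=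
          Finset.sum_attach odds (fun i => T.1.f i)
        have hD := exists_D P hn T.1
        rw [← hodds] at hD
        show ∑ x ∈ odds.attach, T.1.f x.1 = dnat
        omega
    · -- le_mult
      intro i
      by_cases h : i ∈ odds
      · simp only [dif_pos h]
        have hpi := (Finset.mem_filter.1 g.2).1
        have := Finset.mem_pi.1 hpi i h
        rw [Finset.mem_range] at this
        omega
      · simp only [dif_neg h]
        exact Nat.div_le_self _ _
    · -- plus_eq
      have hle : ∀ i, (fun i => if h : i ∈ odds then g.1 i h else P.mult i / 2) i ≤ P.mult i := by
        intro i
        by_cases h : i ∈ odds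
        · simp only [dif_pos h]
          have hpi := (Finset.mem_filter.1 g.2).1
          have := Finset.mem_pi.1 hpi i h
          rw [Finset.mem_range] at this
          omega
        · simp only [dif_neg h]
          exact Nat.div_le_self _ _
      rw [plus_sum' P _ hle]
      have hsum : ∑ i ∈ odds, (if h : i ∈ odds then g.1 i h else P.mult i / 2) = dnat := by
        rw [← Finset.sum_attach odds (fun i => if h : i ∈ odds then g.1 i h else P.mult i / 2)]
        have := (Finset.mem_filter.1 g.2).2
        rw [← this]
        apply Finset.sum_congr rfl
        intro x _
        simp only [dif_pos x.2]
      rw [← hodds, hsum]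
      omega
    · -- minus_eq
      have hle : ∀ i, (fun i => if h : i ∈ odds then g.1 i h else P.mult i / 2) i ≤ P.mult i := by
        intro i
        by_cases h : i ∈ odds
        · simp only [dif_pos h]
          have hpi := (Finset.mem_filter.1 g.2).1
          have := Finset.mem_pi.1 hpi i h
          rw [Finset.mem_range] at this
          omega
        · simp only [dif_neg h]
          exact Nat.div_le_self _ _
      rw [minus_sum' P _ hle]
      have hsum : ∑ i ∈ odds, (if h : i ∈ odds then g.1 i h else P.mult i / 2) = dnat := by
        rw [← Finset.sum_attach odds (fun i => if h : i ∈ odds then g.1 i h else P.mult i / 2)]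
        have := (Finset.mem_filter.1 g.2).2
        rw [← this]
        apply Finset.sum_congr rfl
        intro x _
        simp only [dif_pos x.2]
      have hsplit := sum_odd_split P _ hle
      rw [← hodds] at hsplit ⊢
      rw [hsum] at hsplit
      omega
    · -- BDI
      intro i hi
      have h : i ∉ odds := by
        rw [hodds, Finset.mem_filter]
        rintro ⟨-, hodd⟩
        exact (Nat.not_odd_iff_even.2 hi) hodd
      simp only [dif_neg h]
      have := (Nat.even_iff).1 (hmult i hi)
      omega
    · -- left_inv
      intro T
      apply Subtype.ext
      apply SYD.ext' P
      funext i
      by_cases h : i ∈ odds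
      · simp only [dif_pos h]
      · simp only [dif_neg h]
        rcases Nat.even_or_odd i with he | ho
        · have := T.2 i he
          have h2 := (Nat.even_iff).1 (hmult i he)
          omega
        · have hnp : i ∉ P.partsSet := by
            intro hc
            exact h (by rw [hodds]; exact Finset.mem_filter.2 ⟨hc, ho⟩)
          have h0 := mult_eq_zero_of_not_mem P hnp
          have h1 := T.1.le_mult i
          omega
    · -- right_inv
      intro g
      apply Subtype.ext
      funext i hi
      simp only [dif_pos hi]
  rw [Nat.card_congr e, Nat.card_eq_finsetCard]

lemma coeff_prod_eq (odds : Finset ℕ) (c : ℕ → ℕ) (dnat : ℕ) :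
    Polynomial.coeff
      (∏ i ∈ odds, ∑ j ∈ Finset.range (c i + 1), (Polynomial.X : Polynomial ℤ) ^ j) dnat =
    ((odds.pi (fun i => Finset.range (c i + 1))).filter
      (fun g => ∑ x ∈ odds.attach, g x.1 x.2 = dnat)).card := by
  classical
  rw [Finset.prod_sum, Polynomial.finset_sum_coeff]
  have step : ∀ g ∈ odds.pi (fun i => Finset.range (c i + 1)),
      Polynomial.coeff (∏ x ∈ odds.attach, (Polynomial.X : Polynomial ℤ) ^ (g x.1 x.2)) dnat =
      if (∑ x ∈ odds.attach, g x.1 x.2) = dnat then (1 : ℤ) else 0 := by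
    intro g _
    rw [Finset.prod_pow_eq_pow_sum, Polynomial.coeff_X_pow]
    by_cases h : (∑ x ∈ odds.attach, g x.1 x.2) = dnat
    · rw [if_pos h, if_pos h.symm]
    · rw [if_neg h, if_neg (fun hh => h hh.symm)]
  rw [Finset.sum_congr rfl step, Finset.sum_boole]

end Aux6

/-- Type BDI: for `λ` with every even part of even multiplicity and with
distinct column lengths `0 = k_0 < k_1 < ⋯ < k_m`, the graph `Γ_BDI(λ;p,q)`
has no edges, so its number of connected components equals `#syd_BDI(λ;p,q)`,
which is the coefficient of `t^d` in
`∏_{s : λ_{k_s} odd} (1 + t + ⋯ + t^{k_s - k_{s-1}})`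
where `d = (p - q + #(odd parts of λ))/2`, the coefficient being `0` if `d` is
not a nonnegative integer. -/
theorem stmt15 (P : PartitionData) (p q m : ℕ) (k : ℕ → ℕ)
    (hn : P.boxSum = p + q)
    (hmult : ∀ i, Even i → Even (P.mult i))
    (hdist : ∀ j, 1 ≤ j → P.l j - P.l (j + 1) ≤ 1)
    (hk0 : k 0 = 0) (hkmono : StrictMonoOn k (Set.Icc 0 m))
    (hkim : (Finset.Icc 1 m).image k = colSet P) :
    orbitGraphX P p q 1 SYD.IsBDI = ⊥ ∧
    Nat.card (orbitGraphX P p q 1 SYD.IsBDI).ConnectedComponent =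
      Nat.card {T : SYD P p q // T.IsBDI} ∧
    (Nat.card {T : SYD P p q // T.IsBDI} : ℤ) =
      (if 0 ≤ (p : ℤ) - (q : ℤ) + (P.oddCount : ℤ) ∧
          (2 : ℤ) ∣ ((p : ℤ) - (q : ℤ) + (P.oddCount : ℤ)) then
        Polynomial.coeff
          (∏ s ∈ (Finset.Icc 1 m).filter (fun s => Odd (P.l (k s))),
            ∑ j ∈ Finset.range (k s - k (s - 1) + 1), (Polynomial.X : Polynomial ℤ) ^ j)
          ((((p : ℤ) - (q : ℤ) + (P.oddCount : ℤ)) / 2).toNat)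
      else 0) := by
  classical
  have hbot : orbitGraphX P p q 1 SYD.IsBDI = ⊥ := graph_bot P hmult hdist
  refine ⟨hbot, comp_card hbot, ?_⟩
  set odds := P.partsSet.filter (fun i => Odd i) with hodds
  have hO : P.oddCount = ∑ i ∈ odds, P.mult i := oddCount_eq P
  by_cases hcond : 0 ≤ (p : ℤ) - (q : ℤ) + (P.oddCount : ℤ) ∧
      (2 : ℤ) ∣ ((p : ℤ) - (q : ℤ) + (P.oddCount : ℤ))
  · rw [if_pos hcond]
    obtain ⟨hpos, c, hc⟩ := hcond
    have hc0 : 0 ≤ c := by omega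
    set dnat := ((((p : ℤ) - (q : ℤ) + (P.oddCount : ℤ))) / 2).toNat with hdnat
    have hdn : (dnat : ℤ) = c := by
      rw [hdnat, hc, Int.mul_ediv_cancel_left _ (by norm_num : (2 : ℤ) ≠ 0)]
      exact Int.toNat_of_nonneg hc0
    have hB : 2 * dnat + q = p + ∑ i ∈ odds, P.mult i := by omega
    have hprod : (∏ s ∈ (Finset.Icc 1 m).filter (fun s => Odd (P.l (k s))),
        ∑ j ∈ Finset.range (k s - k (s - 1) + 1), (Polynomial.X : Polynomial ℤ) ^ j)
      = ∏ i ∈ odds, ∑ j ∈ Finset.range (P.mult i + 1), (Polynomial.X : Polynomial ℤ) ^ j := by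
      apply Finset.prod_bij (fun s _ => P.l (k s))
      · intro a ha
        rw [hodds, Finset.mem_filter]
        obtain ⟨ha1, ha2⟩ := Finset.mem_filter.1 ha
        rw [Finset.mem_Icc] at ha1
        exact ⟨lk_mem_parts P m k hkim ha1.1 ha1.2, ha2⟩
      · intro a1 h1 a2 h2 heq
        obtain ⟨h11, -⟩ := Finset.mem_filter.1 h1
        rw [Finset.mem_Icc] at h11
        obtain ⟨h21, -⟩ := Finset.mem_filter.1 h2
        rw [Finset.mem_Icc] at h21
        exact lk_inj P m k hkmono hkim h11.1 h11.2 h21.1 h21.2 heq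
      · intro b hb
        rw [hodds, Finset.mem_filter] at hb
        obtain ⟨s, hs1, hs2, hs3⟩ := parts_surj P m k hk0 hkmono hkim hb.1
        exact ⟨s, Finset.mem_filter.2 ⟨Finset.mem_Icc.2 ⟨hs1, hs2⟩,
          by rw [hs3]; exact hb.2⟩, hs3⟩
      · intro a ha
        obtain ⟨ha1, -⟩ := Finset.mem_filter.1 ha
        rw [Finset.mem_Icc] at ha1
        rw [mult_eq_k P m k hk0 hkmono hkim ha1.1 ha1.2]
    rw [hprod, coeff_prod_eq, card_BDI P hn hmult dnat hB]
  · rw [if_neg hcond]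
    have hempty : IsEmpty {T : SYD P p q // T.IsBDI} := by
      constructor
      rintro ⟨T, -⟩
      have hD := exists_D P hn T
      rw [← hodds] at hD
      apply hcond
      refine ⟨by omega, ⟨((∑ i ∈ odds, T.f i : ℕ) : ℤ), by push_cast; omega⟩⟩
    rw [Nat.card_of_isEmpty]
    simp
end

section
/- Let p and q be even, and let λ be a partition of p + q in which every part occurs with even multiplicity; assume λ has distinct column lengths, let 0 = k_0 < k_1 < ⋯ < k_m be the column lengths of λ listed increasingly, and set d = (p − q + #(odd parts of λ))/2 (d is an even integer whenever syd_CII(λ;p,q) ≠ ∅, and each difference k_s − k_{s−1} is even). Then the number of connected components of Γ_CII(λ;p,q) equals #syd_CII(λ;p,q) (the graph has no edges) and equals the coefficient of t^{d/2} in ∏_{1 ≤ s ≤ m, λ_{k_s} odd} (1 + t + ⋯ + t^{(k_s − k_{s−1})/2}), the coefficient being taken to be 0 if d/2 is not a nonnegative integer. -/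
open Finset

namespace Stmt17Aux

variable (P : PartitionData)

lemma syd_ext {p q : ℕ} {T T' : SYD P p q} (h : T.f = T'.f) : T = T' := by
  cases T; cases T'; cases h; rfl

lemma l_anti : ∀ a b : ℕ, 1 ≤ a → a ≤ b → P.l b ≤ P.l a := by
  intro a b ha hab
  induction b with
  | zero => omega
  | succ n ih =>
    rcases Nat.lt_or_ge a (n+1) with h | h
    · exact le_trans (P.anti n (by omega)) (ih (by omega))
    · have : a = n + 1 := by omega
      subst this; rfl

lemma l_zero {j : ℕ} (h : P.len < j) (hj : 1 ≤ j) : P.l j = 0 := by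
  have := P.pos j hj
  omega

lemma mult_eq_zero_of_not_mem {i : ℕ} (h : i ∉ P.partsSet) : P.mult i = 0 := by
  rw [PartitionData.mult, Finset.card_eq_zero, Finset.filter_eq_empty_iff]
  intro j hj hl
  exact h (Finset.mem_image.mpr ⟨j, hj, hl⟩)

lemma f_eq_zero_of_not_mem {i : ℕ} {f : ℕ → ℕ} (hf : ∀ i, f i ≤ P.mult i)
    (h : i ∉ P.partsSet) : f i = 0 :=
  Nat.le_zero.mp (mult_eq_zero_of_not_mem P h ▸ hf i)

lemma sum_parts {M : Type*} [AddCommMonoid M] (g : ℕ → M) :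
    ∑ i ∈ P.partsSet, P.mult i • g i = ∑ j ∈ Finset.Icc 1 P.len, g (P.l j) := by
  rw [← Finset.sum_fiberwise_of_maps_to (g := P.l) (t := P.partsSet)
    (fun x hx => Finset.mem_image_of_mem _ hx)]
  refine Finset.sum_congr rfl fun i _ => ?_
  rw [PartitionData.mult, ← Finset.sum_const]
  exact (Finset.sum_congr rfl fun j hj => by rw [(Finset.mem_filter.mp hj).2]).symm

lemma sum_mult_mul : ∑ i ∈ P.partsSet, P.mult i * i = P.boxSum := by
  have := sum_parts P (M := ℕ) id
  simpa [smul_eq_mul, PartitionData.boxSum] using this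

lemma oddCount_eq : ∑ i ∈ P.partsSet.filter (fun i => Odd i), P.mult i = P.oddCount := by
  classical
  have := sum_parts P (M := ℕ) (fun i => if Odd i then 1 else 0)
  calc ∑ i ∈ P.partsSet.filter (fun i => Odd i), P.mult i
      = ∑ i ∈ P.partsSet, if Odd i then P.mult i else 0 := by
        rw [Finset.sum_filter]
    _ = ∑ i ∈ P.partsSet, P.mult i • (if Odd i then 1 else 0) := by
        refine Finset.sum_congr rfl fun i _ => ?_
        split <;> simp
    _ = ∑ j ∈ Finset.Icc 1 P.len, (if Odd (P.l j) then 1 else 0) := this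
    _ = P.oddCount := by
        rw [PartitionData.oddCount, Finset.card_eq_sum_ones, Finset.sum_filter]



lemma sum_plus_add_minus (f : ℕ → ℕ) (hf : ∀ i, f i ≤ P.mult i) :
    (∑ i ∈ P.partsSet, (f i * ((i + 1) / 2) + (P.mult i - f i) * (i / 2)))
    + (∑ i ∈ P.partsSet, (f i * (i / 2) + (P.mult i - f i) * ((i + 1) / 2)))
    = P.boxSum := by
  rw [← Finset.sum_add_distrib, ← sum_mult_mul P]
  refine Finset.sum_congr rfl fun i _ => ?_
  have hfi := hf i
  generalize hu : (i + 1) / 2 = u at *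
  generalize hv : i / 2 = v at *
  have h1 : u + v = i := by omega
  zify [hfi]
  have h1' : (u : ℤ) + v = i := by exact_mod_cast congrArg (Nat.cast : ℕ → ℤ) h1
  linear_combination (P.mult i : ℤ) * h1'

lemma sum_plus_sub_minus (f : ℕ → ℕ) (hf : ∀ i, f i ≤ P.mult i) :
    ((∑ i ∈ P.partsSet, (f i * ((i + 1) / 2) + (P.mult i - f i) * (i / 2)) : ℕ) : ℤ)
    - (∑ i ∈ P.partsSet, (f i * (i / 2) + (P.mult i - f i) * ((i + 1) / 2)) : ℕ)
    = ∑ i ∈ P.partsSet.filter (fun i => Odd i), (2 * (f i : ℤ) - P.mult i) := by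
  classical
  rw [Finset.sum_filter, Nat.cast_sum, Nat.cast_sum, ← Finset.sum_sub_distrib]
  refine Finset.sum_congr rfl fun i _ => ?_
  have hfi := hf i
  by_cases hodd : Odd i
  · obtain ⟨c, hc⟩ := hodd
    have h1 : (i + 1) / 2 = i / 2 + 1 := by omega
    rw [if_pos (by exact ⟨c, hc⟩), h1]
    generalize hv : i / 2 = v at *
    push_cast [hfi]
    ring
  · obtain ⟨c, hc⟩ := (Nat.even_or_odd i).resolve_right hodd
    have h1 : (i + 1) / 2 = i / 2 := by omega
    rw [if_neg hodd, h1]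
    generalize hv : i / 2 = v at *
    push_cast [hfi]
    ring

lemma D_eq {p q : ℕ} (T : SYD P p q) :
    (p : ℤ) - q + P.oddCount = ∑ i ∈ P.partsSet.filter (fun i => Odd i), 2 * (T.f i : ℤ) := by
  have h1 := sum_plus_sub_minus P T.f T.le_mult
  rw [T.plus_eq, T.minus_eq] at h1
  have h2 : ((P.oddCount : ℤ)) = ∑ i ∈ P.partsSet.filter (fun i => Odd i), (P.mult i : ℤ) := by
    rw [← oddCount_eq]
    push_cast
    rfl
  rw [h2, h1, ← Finset.sum_add_distrib]
  exact Finset.sum_congr rfl fun i _ => by ring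

lemma D_eq_CII {p q : ℕ} (T : SYD P p q) (hT : T.IsCII) :
    (p : ℤ) - q + P.oddCount = 4 * ∑ i ∈ P.partsSet.filter (fun i => Odd i), ((T.f i / 2 : ℕ) : ℤ) := by
  rw [D_eq P T, Finset.mul_sum]
  refine Finset.sum_congr rfl fun i hi => ?_
  obtain ⟨u, hu⟩ := (hT.2.2.2 i (Finset.mem_filter.mp hi).2).2
  rw [hu]
  have : (u + u) / 2 = u := by omega
  rw [this]
  push_cast
  ring

lemma nonempty_CII_cond {p q : ℕ} (T : SYD P p q) (hT : T.IsCII) :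
    0 ≤ (p : ℤ) - q + P.oddCount ∧ (4 : ℤ) ∣ ((p : ℤ) - q + P.oddCount) := by
  rw [D_eq_CII P T hT]
  constructor
  · positivity
  · exact ⟨_, rfl⟩

structure KHyp (P : PartitionData) (m : ℕ) (k : ℕ → ℕ) : Prop where
  hdist : ∀ j, 1 ≤ j → P.l j - P.l (j + 1) ≤ 1
  hk0 : k 0 = 0
  hkmono : StrictMonoOn k (Set.Icc 0 m)
  hkim : (Finset.Icc 1 m).image k = colSet P

variable {m : ℕ} {k : ℕ → ℕ}

lemma k_mem_col (H : KHyp P m k) {s : ℕ} (h1 : 1 ≤ s) (h2 : s ≤ m) :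
    (1 ≤ k s ∧ k s ≤ P.len) ∧ P.l (k s + 1) < P.l (k s) := by
  have : k s ∈ colSet P := by
    rw [← H.hkim]; exact Finset.mem_image_of_mem k (Finset.mem_Icc.mpr ⟨h1, h2⟩)
  have := Finset.mem_filter.mp this
  exact ⟨Finset.mem_Icc.mp this.1, this.2⟩

lemma k_le_len (H : KHyp P m k) {s : ℕ} (h2 : s ≤ m) : k s ≤ P.len := by
  rcases Nat.eq_zero_or_pos s with h | h
  · subst h; rw [H.hk0]; exact Nat.zero_le _
  · exact (k_mem_col P H h h2).1.2

lemma k_lt_k (H : KHyp P m k) {a b : ℕ} (hb : b ≤ m) (hab : a < b) : k a < k b :=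
  H.hkmono ⟨Nat.zero_le _, by omega⟩ ⟨Nat.zero_le _, hb⟩ hab

lemma k_le_k (H : KHyp P m k) {a b : ℕ} (hb : b ≤ m) (hab : a ≤ b) : k a ≤ k b := by
  rcases Nat.eq_or_lt_of_le hab with h | h
  · exact h ▸ le_refl _
  · exact le_of_lt (k_lt_k P H hb h)

lemma km_eq_len (H : KHyp P m k) : k m = P.len := by
  rcases Nat.eq_zero_or_pos P.len with hlen | hlen
  · have hm : m = 0 := by
      by_contra hm
      have h1 := (k_mem_col P H (le_refl 1) (by omega)).1
      omega
    rw [hm, H.hk0, hlen]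
  · have h1 : P.len ∈ colSet P := by
      rw [colSet, Finset.mem_filter, Finset.mem_Icc]
      refine ⟨⟨hlen, le_refl _⟩, ?_⟩
      have h2 : P.l (P.len + 1) = 0 := l_zero P (by omega) (by omega)
      have h3 : 0 < P.l P.len := (P.pos P.len hlen).mpr (le_refl _)
      omega
    rw [← H.hkim] at h1
    obtain ⟨s, hs, hks⟩ := Finset.mem_image.mp h1
    rw [Finset.mem_Icc] at hs
    have h4 := k_le_k P H (le_refl m) hs.2
    have h5 := k_le_len P H (le_refl m)
    omega

lemma block_const (H : KHyp P m k) {s : ℕ} (h1 : 1 ≤ s) (h2 : s ≤ m) :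
    ∀ h, k (s - 1) < h → h ≤ k s → P.l h = P.l (k s) := by
  have key : ∀ h, k (s - 1) < h → h < k s → P.l h = P.l (h + 1) := by
    intro h hh1 hh2
    have hge1 : 1 ≤ h := by omega
    have hle : P.l (h + 1) ≤ P.l h := P.anti h hge1
    by_contra hne
    have hlt : P.l (h + 1) < P.l h := lt_of_le_of_ne hle (fun e => hne e.symm)
    have hcol : h ∈ colSet P := by
      rw [colSet, Finset.mem_filter, Finset.mem_Icc]
      have : h ≤ P.len := le_trans (le_of_lt hh2) (k_le_len P H h2)
      exact ⟨⟨hge1, this⟩, hlt⟩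
    rw [← H.hkim] at hcol
    obtain ⟨s', hs', hks'⟩ := Finset.mem_image.mp hcol
    rw [Finset.mem_Icc] at hs'
    have hlt1 : k (s - 1) < k s' := by omega
    have hlt2 : k s' < k s := by omega
    have o1 : s - 1 < s' := (H.hkmono.lt_iff_lt ⟨Nat.zero_le _, by omega⟩
      ⟨Nat.zero_le _, by omega⟩).mp hlt1
    have o2 : s' < s := (H.hkmono.lt_iff_lt ⟨Nat.zero_le _, by omega⟩
      ⟨Nat.zero_le _, by omega⟩).mp hlt2
    omega
  have main : ∀ n h, h + n = k s → k (s - 1) < h → P.l h = P.l (k s) := by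
    intro n
    induction n with
    | zero => intro h he _; rw [← he]; norm_num
    | succ n ih =>
      intro h he hh
      have : P.l h = P.l (h + 1) := key h hh (by omega)
      rw [this]
      exact ih (h + 1) (by omega) (by omega)
  intro h hh1 hh2
  exact main (k s - h) h (by omega) hh1

lemma lk_strict (H : KHyp P m k) {s s' : ℕ} (h1 : 1 ≤ s) (h2 : s < s') (h3 : s' ≤ m) :
    P.l (k s') < P.l (k s) := by
  have ha : k s < k s' := k_lt_k P H h3 h2
  have hb : P.l (k s') ≤ P.l (k s + 1) := l_anti P (k s + 1) (k s') (by omega) (by omega)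
  have hc := (k_mem_col P H h1 (by omega)).2
  omega

lemma lk_le (H : KHyp P m k) {s s' : ℕ} (h1 : 1 ≤ s) (h2 : s ≤ s') (h3 : s' ≤ m) :
    P.l (k s') ≤ P.l (k s) := by
  rcases Nat.eq_or_lt_of_le h2 with h | h
  · rw [h]
  · exact le_of_lt (lk_strict P H h1 h h3)

lemma exists_block (H : KHyp P m k) {h : ℕ} (hh : 1 ≤ h) (hlen : h ≤ P.len) :
    ∃ s, 1 ≤ s ∧ s ≤ m ∧ k (s - 1) < h ∧ h ≤ k s := by
  have hex : ∃ s, h ≤ k s := ⟨m, by rw [km_eq_len P H]; exact hlen⟩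
  classical
  have hks : h ≤ k (Nat.find hex) := Nat.find_spec hex
  have hs1 : 1 ≤ Nat.find hex := by
    rcases Nat.eq_zero_or_pos (Nat.find hex) with h0 | h0
    · exfalso; rw [h0, H.hk0] at hks; omega
    · exact h0
  have hsm : Nat.find hex ≤ m := by
    by_contra hsm
    have h5 : ¬ (h ≤ k m) := Nat.find_min hex (by omega)
    rw [km_eq_len P H] at h5
    omega
  have hprev : ¬ (h ≤ k (Nat.find hex - 1)) := Nat.find_min hex (by omega)
  exact ⟨Nat.find hex, hs1, hsm, by omega, hks⟩

lemma parts_eq_image (H : KHyp P m k) :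
    P.partsSet = (Finset.Icc 1 m).image (fun s => P.l (k s)) := by
  apply Finset.Subset.antisymm
  · intro i hi
    obtain ⟨h, hh, hlh⟩ := Finset.mem_image.mp hi
    rw [Finset.mem_Icc] at hh
    obtain ⟨s, hs1, hsm, hb1, hb2⟩ := exists_block P H hh.1 hh.2
    have := block_const P H hs1 hsm h hb1 hb2
    exact Finset.mem_image.mpr ⟨s, Finset.mem_Icc.mpr ⟨hs1, hsm⟩, by rw [← this, hlh]⟩
  · intro i hi
    obtain ⟨s, hs, hls⟩ := Finset.mem_image.mp hi
    rw [Finset.mem_Icc] at hs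
    refine Finset.mem_image.mpr ⟨k s, ?_, hls⟩
    have := (k_mem_col P H hs.1 hs.2).1
    exact Finset.mem_Icc.mpr this

lemma mult_lk (H : KHyp P m k) {s : ℕ} (h1 : 1 ≤ s) (h2 : s ≤ m) :
    P.mult (P.l (k s)) = k s - k (s - 1) := by
  have hfe : (Finset.Icc 1 P.len).filter (fun j => P.l j = P.l (k s))
      = Finset.Ioc (k (s - 1)) (k s) := by
    apply Finset.Subset.antisymm
    · intro j hj
      obtain ⟨hj1, hj2⟩ := Finset.mem_filter.mp hj
      rw [Finset.mem_Icc] at hj1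
      obtain ⟨s', hs1', hsm', hb1, hb2⟩ := exists_block P H hj1.1 hj1.2
      have heq : P.l (k s') = P.l (k s) := by
        rw [← block_const P H hs1' hsm' j hb1 hb2]; exact hj2
      have hss : s' = s := by
        rcases lt_trichotomy s' s with h | h | h
        · exact absurd heq (ne_of_gt (lk_strict P H hs1' h h2))
        · exact h
        · exact absurd heq.symm (ne_of_gt (lk_strict P H h1 h hsm'))
      subst hss
      rw [Finset.mem_Ioc]
      omega
    · intro j hj
      rw [Finset.mem_Ioc] at hj
      refine Finset.mem_filter.mpr ⟨Finset.mem_Icc.mpr ⟨by omega, ?_⟩, ?_⟩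
      · exact le_trans hj.2 (k_le_len P H h2)
      · exact block_const P H h1 h2 j hj.1 hj.2
  rw [PartitionData.mult, hfe, Nat.card_Ioc]

lemma lk_injOn (H : KHyp P m k) : Set.InjOn (fun s => P.l (k s)) (Finset.Icc 1 m) := by
  intro a ha b hb hab
  simp only [Finset.coe_Icc, Set.mem_Icc] at ha hb
  rcases lt_trichotomy a b with h | h | h
  · exact absurd hab (ne_of_gt (lk_strict P H ha.1 h hb.2))
  · exact h
  · exact absurd hab.symm (ne_of_gt (lk_strict P H hb.1 h ha.2))

lemma consec_eq_succ (H : KHyp P m k) {i j : ℕ} (hc : Consec P i j) : i = j + 1 := by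
  obtain ⟨hi, hj, hji, hbet⟩ := hc
  rw [parts_eq_image P H] at hi hj
  obtain ⟨s, hs, his⟩ := Finset.mem_image.mp hi
  obtain ⟨s', hs', hjs⟩ := Finset.mem_image.mp hj
  rw [Finset.mem_Icc] at hs hs'
  have hss : s < s' := by
    by_contra hss
    have := lk_le P H hs'.1 (by omega) hs.2
    omega
  have hsm : s + 1 ≤ m := by omega
  have hx_mem : P.l (k (s + 1)) ∈ P.partsSet := by
    rw [parts_eq_image P H]
    exact Finset.mem_image.mpr ⟨s + 1, Finset.mem_Icc.mpr ⟨by omega, hsm⟩, rfl⟩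
  have hxi : P.l (k (s + 1)) < i := his ▸ lk_strict P H hs.1 (by omega) hsm
  have hjx : j ≤ P.l (k (s + 1)) := hjs ▸ lk_le P H (by omega) (by omega) hs'.2
  have hxj : P.l (k (s + 1)) = j := by
    have := hbet _ hx_mem
    omega
  have hks1 : 1 ≤ k s := (k_mem_col P H hs.1 hs.2).1.1
  have hle : P.l (k s) - P.l (k s + 1) ≤ 1 := H.hdist (k s) hks1
  have hblock : P.l (k s + 1) = P.l (k (s + 1)) := by
    have hA : k (s + 1 - 1) < k s + 1 := by norm_num
    have hB : k s + 1 ≤ k (s + 1) := k_lt_k P H hsm (by omega)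
    exact block_const P H (by omega) hsm (k s + 1) hA hB
  have hanti : P.l (k s + 1) ≤ P.l (k s) := P.anti (k s) hks1
  omega

lemma term_odd {j f mu : ℕ} (hodd : Odd j) (hfm : f ≤ mu) :
    f * ((j + 1) / 2) + (mu - f) * (j / 2) = f + mu * (j / 2) := by
  obtain ⟨c, hc⟩ := hodd
  have h1 : (j + 1) / 2 = c + 1 := by omega
  have h2 : j / 2 = c := by omega
  rw [h1, h2]
  zify [hfm]
  ring

lemma pinned_even {p q : ℕ} {T T' : SYD P p q} (hT : T.IsCII) (hT' : T'.IsCII)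
    {i : ℕ} (hi : Even i) : T.f i = T'.f i := by
  have h1 := hT.2.2.1 i hi
  have h2 := hT'.2.2.1 i hi
  omega

lemma adj_false (H : KHyp P m k) {p q : ℕ} {T T' : SYD P p q}
    (hT : T.IsCII) (hT' : T'.IsCII) (h : AdjRel P 2 T T') : False := by
  rcases h with ⟨i, j, hc, hoff, hor⟩ | ⟨j, hmin, hoff, hor⟩
  · have hij : i = j + 1 := consec_eq_succ P H hc
    rcases Nat.even_or_odd i with he | ho
    · have := pinned_even P hT hT' he
      omega
    · have hje : Even j := by
        rcases Nat.even_or_odd j with h | h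
        · exact h
        · exfalso; obtain ⟨a, ha⟩ := ho; obtain ⟨b, hb⟩ := h; omega
      have := pinned_even P hT hT' hje
      omega
  · rcases Nat.even_or_odd j with he | ho
    · have := pinned_even P hT hT' he
      omega
    · -- sum argument
      have hjmem : j ∈ P.partsSet := hmin.1
      have hsum : ∑ i ∈ P.partsSet, (T.f i * ((i + 1) / 2) + (P.mult i - T.f i) * (i / 2))
          = ∑ i ∈ P.partsSet, (T'.f i * ((i + 1) / 2) + (P.mult i - T'.f i) * (i / 2)) := by
        rw [T.plus_eq, T'.plus_eq]
      rw [← Finset.add_sum_erase _ _ hjmem, ← Finset.add_sum_erase _ _ hjmem] at hsum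
      have htail : ∑ i ∈ P.partsSet.erase j,
            (T.f i * ((i + 1) / 2) + (P.mult i - T.f i) * (i / 2))
          = ∑ i ∈ P.partsSet.erase j,
            (T'.f i * ((i + 1) / 2) + (P.mult i - T'.f i) * (i / 2)) := by
        refine Finset.sum_congr rfl fun x hx => ?_
        rw [hoff x (Finset.ne_of_mem_erase hx)]
      have hterm : T.f j * ((j + 1) / 2) + (P.mult j - T.f j) * (j / 2)
          = T'.f j * ((j + 1) / 2) + (P.mult j - T'.f j) * (j / 2) := by omega
      rw [term_odd ho (T.le_mult j), term_odd ho (T'.le_mult j)] at hterm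
      omega

lemma graph_bot (H : KHyp P m k) {p q : ℕ} :
    orbitGraphX P p q 2 SYD.IsCII = ⊥ := by
  ext a b
  simp only [orbitGraphX, SimpleGraph.fromRel_adj, SimpleGraph.bot_adj, iff_false, not_and]
  intro _
  rintro (h | h)
  · exact absurd h (fun h => adj_false P H a.2 b.2 h)
  · exact absurd h (fun h => adj_false P H b.2 a.2 h)

lemma card_comp_bot {V : Type*} :
    Nat.card (⊥ : SimpleGraph V).ConnectedComponent = Nat.card V := by
  refine (Nat.card_eq_of_bijective (fun v => (⊥ : SimpleGraph V).connectedComponentMk v)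
    ⟨fun a b hab => ?_, fun c => c.exists_rep⟩).symm
  exact SimpleGraph.reachable_bot.mp (SimpleGraph.ConnectedComponent.exact hab)

lemma coeff_prod_geom (S : Finset ℕ) (t : ℕ → Finset ℕ) (N : ℕ) :
    (∏ s ∈ S, ∑ j ∈ t s, (Polynomial.X : Polynomial ℤ) ^ j).coeff N
      = (((S.pi t).filter
          (fun a => ∑ x ∈ S.attach, a x.1 x.2 = N)).card : ℤ) := by
  classical
  rw [Finset.prod_sum, Polynomial.finset_sum_coeff]
  rw [Finset.card_filter]
  push_cast
  refine Finset.sum_congr rfl fun a _ => ?_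
  rw [Finset.prod_pow_eq_pow_sum, Polynomial.coeff_X_pow]
  by_cases h : ∑ x ∈ S.attach, a x.1 x.2 = N
  · rw [if_pos h, if_pos h.symm]
  · rw [if_neg h, if_neg (fun e => h e.symm)]

lemma sum_odd_parts {M : Type*} [AddCommMonoid M] (H : KHyp P m k) (g : ℕ → M) :
    ∑ i ∈ P.partsSet.filter (fun i => Odd i), g i
      = ∑ s ∈ (Finset.Icc 1 m).filter (fun s => Odd (P.l (k s))), g (P.l (k s)) := by
  classical
  rw [parts_eq_image P H, Finset.filter_image, Finset.sum_image]
  intro a ha b hb hab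
  have ha' := Finset.mem_Icc.mp (Finset.mem_filter.mp ha).1
  have hb' := Finset.mem_Icc.mp (Finset.mem_filter.mp hb).1
  exact lk_injOn P H (by simp [Finset.mem_Icc]; omega) (by simp [Finset.mem_Icc]; omega) hab

lemma card_CII (H : KHyp P m k) {p q N : ℕ}
    (hp : Even p) (hq : Even q)
    (hmult : ∀ i, Even (P.mult i)) (hbox : P.boxSum = p + q)
    (hN : (p : ℤ) - q + P.oddCount = 4 * N)
    (S : Finset ℕ) (hS : S = (Finset.Icc 1 m).filter (fun s => Odd (P.l (k s))))
    (t : ℕ → Finset ℕ) (ht : t = fun s => Finset.range ((k s - k (s - 1)) / 2 + 1)) :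
    Nat.card {T : SYD P p q // T.IsCII}
      = ((S.pi t).filter (fun a => ∑ x ∈ S.attach, a x.1 x.2 = N)).card := by
  classical
  have hSmem : ∀ s ∈ S, (Odd (P.l (k s)) ∧ 1 ≤ s ∧ s ≤ m) := by
    intro s hs
    rw [hS, Finset.mem_filter, Finset.mem_Icc] at hs
    exact ⟨hs.2, hs.1⟩
  have hmem_parts : ∀ s ∈ S, P.l (k s) ∈ P.partsSet := by
    intro s hs
    obtain ⟨_, h1, h2⟩ := hSmem s hs
    rw [parts_eq_image P H]
    exact Finset.mem_image.mpr ⟨s, Finset.mem_Icc.mpr ⟨h1, h2⟩, rfl⟩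
  -- the forward map on raw data
  set Φf : SYD P p q → (∀ s ∈ S, ℕ) := fun T => fun s _ => T.f (P.l (k s)) / 2 with hΦf
  -- membership of the forward image
  have hfwd : ∀ (T : SYD P p q), T.IsCII →
      Φf T ∈ (S.pi t).filter (fun a => ∑ x ∈ S.attach, a x.1 x.2 = N) := by
    intro T hT
    rw [Finset.mem_filter]
    constructor
    · rw [Finset.mem_pi]
      intro s hs
      obtain ⟨hodd, h1, h2⟩ := hSmem s hs
      have hle := T.le_mult (P.l (k s))
      rw [mult_lk P H h1 h2] at hle
      obtain ⟨u, hu⟩ := (hT.2.2.2 (P.l (k s)) hodd).2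
      obtain ⟨v, hv⟩ := hmult (P.l (k s))
      rw [mult_lk P H h1 h2] at hv
      rw [ht, Finset.mem_range]
      show T.f (P.l (k s)) / 2 < (k s - k (s - 1)) / 2 + 1
      omega
    · -- the sum condition
      have h1 := D_eq_CII P T hT
      rw [hN, sum_odd_parts P H (fun i => ((T.f i / 2 : ℕ) : ℤ)), ← hS] at h1
      have h2 : (N : ℤ) = ∑ s ∈ S, ((T.f (P.l (k s)) / 2 : ℕ) : ℤ) := by omega
      rw [← Finset.sum_attach S (fun s => ((T.f (P.l (k s)) / 2 : ℕ) : ℤ))] at h2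
      have h3 : (N : ℤ) = ((∑ x ∈ S.attach, T.f (P.l (k x.1)) / 2 : ℕ) : ℤ) := by
        rw [h2]; push_cast; rfl
      exact_mod_cast h3.symm
  rw [← Nat.card_eq_finsetCard]
  refine Nat.card_eq_of_bijective
    (fun T => (⟨Φf T.1, hfwd T.1 T.2⟩ : {a // a ∈ (S.pi t).filter
      (fun a => ∑ x ∈ S.attach, a x.1 x.2 = N)})) ⟨?_, ?_⟩
  · -- injectivity
    intro T1 T2 hEq
    have hEq' : Φf T1.1 = Φf T2.1 := congrArg Subtype.val hEq
    refine Subtype.ext (syd_ext P (funext fun i => ?_))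
    by_cases hi : i ∈ P.partsSet
    · rcases Nat.even_or_odd i with he | ho
      · exact pinned_even P T1.2 T2.2 he
      · rw [parts_eq_image P H] at hi
        obtain ⟨s, hs, his⟩ := Finset.mem_image.mp hi
        rw [Finset.mem_Icc] at hs
        have hsS : s ∈ S := by
          rw [hS, Finset.mem_filter, Finset.mem_Icc]
          exact ⟨hs, his ▸ ho⟩
        have hhalf : T1.1.f (P.l (k s)) / 2 = T2.1.f (P.l (k s)) / 2 :=
          congrFun (congrFun hEq' s) hsS
        obtain ⟨u, hu⟩ := (T1.2.2.2.2 i ho).2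
        obtain ⟨v, hv⟩ := (T2.2.2.2.2 i ho).2
        rw [his] at hhalf
        omega
    · rw [f_eq_zero_of_not_mem P T1.1.le_mult hi, f_eq_zero_of_not_mem P T2.1.le_mult hi]
  · -- surjectivity
    rintro ⟨a, ha⟩
    rw [Finset.mem_filter] at ha
    obtain ⟨hpi, hsum⟩ := ha
    rw [Finset.mem_pi] at hpi
    -- the candidate function
    set f₀ : ℕ → ℕ := fun i => if Odd i then
        2 * (∑ x ∈ S.attach.filter (fun x => P.l (k x.1) = i), a x.1 x.2)
      else P.mult i / 2 with hf₀
    have hsingle : ∀ s (hs : s ∈ S),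
        S.attach.filter (fun x => P.l (k x.1) = P.l (k s)) = {⟨s, hs⟩} := by
      intro s hs
      apply Finset.eq_singleton_iff_unique_mem.mpr
      refine ⟨Finset.mem_filter.mpr ⟨Finset.mem_attach _ _, rfl⟩, ?_⟩
      rintro ⟨x, hx⟩ hxm
      obtain ⟨_, hx2⟩ := Finset.mem_filter.mp hxm
      obtain ⟨_, hx1, hxm'⟩ := hSmem x hx
      obtain ⟨_, hs1, hsm'⟩ := hSmem s hs
      have : x = s := lk_injOn P H (by simp [Finset.mem_Icc]; omega)
        (by simp [Finset.mem_Icc]; omega) hx2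
      exact Subtype.ext this
    have hval : ∀ s (hs : s ∈ S), f₀ (P.l (k s)) = 2 * a s hs := by
      intro s hs
      simp only [hf₀, if_pos (hSmem s hs).1]
      rw [hsingle s hs, Finset.sum_singleton]
    have hf₀_even : ∀ i, Even i → f₀ i = P.mult i / 2 := by
      intro i hi
      simp only [hf₀, if_neg (Nat.not_odd_iff_even.mpr hi)]
    have hf₀_odd_notmem : ∀ i, Odd i → i ∉ P.partsSet → f₀ i = 0 := by
      intro i ho hi
      simp only [hf₀, if_pos ho]
      have hempty : S.attach.filter (fun x => P.l (k x.1) = i) = ∅ := by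
        apply Finset.filter_eq_empty_iff.mpr
        rintro ⟨x, hx⟩ _ hxi
        exact hi (hxi ▸ hmem_parts x hx)
      rw [hempty, Finset.sum_empty, Nat.mul_zero]
    have hle : ∀ i, f₀ i ≤ P.mult i := by
      intro i
      by_cases hi : i ∈ P.partsSet
      · rcases Nat.even_or_odd i with he | ho
        · rw [hf₀_even i he]; omega
        · rw [parts_eq_image P H] at hi
          obtain ⟨s, hs, his⟩ := Finset.mem_image.mp hi
          rw [Finset.mem_Icc] at hs
          subst his
          have hsS : s ∈ S := by
            rw [hS, Finset.mem_filter, Finset.mem_Icc]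
            exact ⟨hs, ho⟩
          have h1 := hpi s hsS
          rw [ht, Finset.mem_range] at h1
          obtain ⟨v, hv⟩ := hmult (P.l (k s))
          have hm := mult_lk P H hs.1 hs.2
          rw [hval s hsS]
          omega
      · have h0 : P.mult i = 0 := mult_eq_zero_of_not_mem P hi
        rcases Nat.even_or_odd i with he | ho
        · rw [hf₀_even i he]; omega
        · rw [hf₀_odd_notmem i ho hi]
          omega
    -- the sum identities
    have hAB := sum_plus_add_minus P f₀ hle
    have hD := sum_plus_sub_minus P f₀ hle
    have hDval : ∑ i ∈ P.partsSet.filter (fun i => Odd i), (2 * (f₀ i : ℤ) - P.mult i)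
        = 4 * N - P.oddCount := by
      rw [sum_odd_parts P H (fun i => 2 * (f₀ i : ℤ) - P.mult i), ← hS,
        Finset.sum_sub_distrib]
      have e1 : ∑ s ∈ S, 2 * (f₀ (P.l (k s)) : ℤ) = 4 * N := by
        rw [← Finset.sum_attach S (fun s => 2 * (f₀ (P.l (k s)) : ℤ))]
        have : ∀ x : {x // x ∈ S}, 2 * (f₀ (P.l (k x.1)) : ℤ) = 4 * (a x.1 x.2 : ℤ) := by
          intro x
          rw [hval x.1 x.2]
          push_cast
          ring
        rw [Finset.sum_congr rfl (fun x _ => this x), ← Finset.mul_sum]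
        rw [show (4:ℤ) * N = 4 * (N:ℤ) from rfl, ← hsum]
        push_cast
        rfl
      have e2 : ∑ s ∈ S, (P.mult (P.l (k s)) : ℤ) = P.oddCount := by
        rw [← oddCount_eq P, sum_odd_parts P H (fun i => P.mult i), ← hS]
        push_cast
        rfl
      rw [e1, e2]
    rw [hDval] at hD
    have hA : ∑ i ∈ P.partsSet, (f₀ i * ((i + 1) / 2) + (P.mult i - f₀ i) * (i / 2)) = p ∧
        ∑ i ∈ P.partsSet, (f₀ i * (i / 2) + (P.mult i - f₀ i) * ((i + 1) / 2)) = q := by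
      rw [hbox] at hAB
      omega
    set T0 : SYD P p q := ⟨f₀, hle, hA.1, hA.2⟩ with hT0
    have hCII : T0.IsCII := by
      refine ⟨hp, hq, ?_, ?_⟩
      · intro i hi
        show 2 * f₀ i = P.mult i
        rw [hf₀_even i hi]
        obtain ⟨v, hv⟩ := hmult i
        omega
      · intro i ho
        refine ⟨hmult i, ?_⟩
        show Even (f₀ i)
        simp only [hf₀, if_pos ho]
        exact even_two_mul _
    refine ⟨⟨T0, hCII⟩, ?_⟩
    apply Subtype.ext
    funext s hs
    show T0.f (P.l (k s)) / 2 = a s hs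
    rw [hT0]
    show f₀ (P.l (k s)) / 2 = a s hs
    rw [hval s hs]
    omega

end Stmt17Aux

/-- Type CII: `p`, `q` even, every part of `λ` of even multiplicity, and `λ`
with distinct column lengths `0 = k_0 < k_1 < ⋯ < k_m`.  Each difference
`k_s - k_{s-1}` is even, and `d = (p - q + #(odd parts))/2` is an even
nonnegative integer whenever `syd_CII(λ;p,q) ≠ ∅`.  The graph `Γ_CII(λ;p,q)`
has no edges, so its number of connected components equals `#syd_CII(λ;p,q)`,
which is the coefficient of `t^{d/2}` in
`∏_{s : λ_{k_s} odd} (1 + t + ⋯ + t^{(k_s - k_{s-1})/2})`,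
the coefficient being `0` if `d/2` is not a nonnegative integer. -/
theorem stmt17 (P : PartitionData) (p q m : ℕ) (k : ℕ → ℕ)
    (hp : Even p) (hq : Even q)
    (hn : P.boxSum = p + q)
    (hmult : ∀ i, Even (P.mult i))
    (hdist : ∀ j, 1 ≤ j → P.l j - P.l (j + 1) ≤ 1)
    (hk0 : k 0 = 0) (hkmono : StrictMonoOn k (Set.Icc 0 m))
    (hkim : (Finset.Icc 1 m).image k = colSet P) :
    (∀ s, 1 ≤ s → s ≤ m → Even (k s - k (s - 1))) ∧
    (Nonempty {T : SYD P p q // T.IsCII} →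
      0 ≤ (p : ℤ) - (q : ℤ) + (P.oddCount : ℤ) ∧
        (4 : ℤ) ∣ ((p : ℤ) - (q : ℤ) + (P.oddCount : ℤ))) ∧
    orbitGraphX P p q 2 SYD.IsCII = ⊥ ∧
    Nat.card (orbitGraphX P p q 2 SYD.IsCII).ConnectedComponent =
      Nat.card {T : SYD P p q // T.IsCII} ∧
    (Nat.card {T : SYD P p q // T.IsCII} : ℤ) =
      (if 0 ≤ (p : ℤ) - (q : ℤ) + (P.oddCount : ℤ) ∧
          (4 : ℤ) ∣ ((p : ℤ) - (q : ℤ) + (P.oddCount : ℤ)) then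
        Polynomial.coeff
          (∏ s ∈ (Finset.Icc 1 m).filter (fun s => Odd (P.l (k s))),
            ∑ j ∈ Finset.range ((k s - k (s - 1)) / 2 + 1),
              (Polynomial.X : Polynomial ℤ) ^ j)
          ((((p : ℤ) - (q : ℤ) + (P.oddCount : ℤ)) / 4).toNat)
      else 0) := by
  classical
  have H : Stmt17Aux.KHyp P m k := ⟨hdist, hk0, hkmono, hkim⟩
  have c2 : Nonempty {T : SYD P p q // T.IsCII} →
      0 ≤ (p : ℤ) - (q : ℤ) + (P.oddCount : ℤ) ∧
        (4 : ℤ) ∣ ((p : ℤ) - (q : ℤ) + (P.oddCount : ℤ)) := by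
    rintro ⟨⟨T, hT⟩⟩
    exact Stmt17Aux.nonempty_CII_cond P T hT
  have c3 : orbitGraphX P p q 2 SYD.IsCII = ⊥ := Stmt17Aux.graph_bot P H
  refine ⟨?_, c2, c3, ?_, ?_⟩
  · intro s h1 h2
    have := hmult (P.l (k s))
    rwa [Stmt17Aux.mult_lk P H h1 h2] at this
  · rw [c3]
    exact Stmt17Aux.card_comp_bot
  · by_cases hcond : 0 ≤ (p : ℤ) - (q : ℤ) + (P.oddCount : ℤ) ∧
        (4 : ℤ) ∣ ((p : ℤ) - (q : ℤ) + (P.oddCount : ℤ))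
    · rw [if_pos hcond]
      set D : ℤ := (p : ℤ) - (q : ℤ) + (P.oddCount : ℤ) with hD
      set N : ℕ := (D / 4).toNat with hNdef
      have hDN : D = 4 * (N : ℤ) := by
        obtain ⟨c, hc⟩ := hcond.2
        have hc0 : 0 ≤ c := by omega
        have h4 : D / 4 = c := by rw [hc, Int.mul_ediv_cancel_left _ (by norm_num)]
        rw [hNdef, h4, Int.toNat_of_nonneg hc0, hc]
      rw [Stmt17Aux.card_CII P H hp hq hmult hn hDN
        ((Finset.Icc 1 m).filter (fun s => Odd (P.l (k s)))) rfl
        (fun s => Finset.range ((k s - k (s - 1)) / 2 + 1)) rfl]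
      exact (Stmt17Aux.coeff_prod_geom _ _ N).symm
    · rw [if_neg hcond]
      have hem : IsEmpty {T : SYD P p q // T.IsCII} := by
        rw [← not_nonempty_iff]
        intro hne
        exact hcond (c2 hne)
      rw [Nat.card_of_isEmpty]
      rfl
end
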